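/- arXiv:1602.04623 — 4 statements merged into one kernel-verified Lean document; each statement's English description precedes it below -/
import Mathlib

section
/- For any graph G, k(G) ≥ θ_e(G) − |V(G)| + p(G). -/
/-- A digraph (given by its arc relation) is acyclic if it has no directed cycle. -/
def Digraph.Acyclic {W : Type*} (A : W → W → Prop) : Prop :=
  ∀ v, ¬ Relation.TransGen A v v

/-- The competition graph of a digraph: distinct `x`, `y` are adjacent iff
they have a common out-neighbor. -/
def competitionGraph {W : Type*} (A : W → W → Prop) : SimpleGraph W where
  Adj x y := x ≠ y ∧ ∃ z, A x z ∧ A y z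
  symm := by
    constructor
    rintro x y ⟨h, z, hx, hy⟩
    exact ⟨h.symm, z, hy, hx⟩
  loopless := by
    constructor
    rintro x ⟨h, -⟩
    exact h rfl

/-- `G` together with `k` additional isolated vertices. -/
def addIsolated {V : Type*} (G : SimpleGraph V) (k : ℕ) : SimpleGraph (V ⊕ Fin k) where
  Adj x y := ∃ u v, G.Adj u v ∧ x = Sum.inl u ∧ y = Sum.inl v
  symm := by
    constructor
    rintro x y ⟨u, v, h, rfl, rfl⟩
    exact ⟨v, u, h.symm, rfl, rfl⟩
  loopless := by
    constructor
    rintro x ⟨u, v, h, rfl, hy⟩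
    exact G.loopless.irrefl u (Sum.inl.inj hy ▸ h)

/-- `F` is an edge clique cover of `G`. -/
def IsEdgeCliqueCover {V : Type*} (G : SimpleGraph V) (F : Finset (Set V)) : Prop :=
  (∀ C ∈ F, G.IsClique C) ∧ ∀ u v, G.Adj u v → ∃ C ∈ F, u ∈ C ∧ v ∈ C

/-- The edge clique cover number `θ_e(G)`. -/
noncomputable def eccNumber {V : Type*} (G : SimpleGraph V) : ℕ :=
  sInf {n | ∃ F : Finset (Set V), IsEdgeCliqueCover G F ∧ F.card = n}

/-- An acyclic digraph `A` on `V ⊕ Fin k` realizes `G` with `k` added isolated vertices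
if its competition graph is `G` together with `k` isolated vertices. -/
def Realizes {V : Type*} (G : SimpleGraph V) (k : ℕ)
    (A : (V ⊕ Fin k) → (V ⊕ Fin k) → Prop) : Prop :=
  Digraph.Acyclic A ∧ competitionGraph A = addIsolated G k

/-- The competition number `k(G)`. -/
noncomputable def compNumber {V : Type*} (G : SimpleGraph V) : ℕ :=
  sInf {k | ∃ A : (V ⊕ Fin k) → (V ⊕ Fin k) → Prop, Realizes G k A}

/-- The primary predator index `p(G)`: the maximum number of in-degree-0 vertices over
all acyclic digraphs whose competition graph is `G` plus `k(G)` isolated vertices. -/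
noncomputable def predatorIndex {V : Type*} (G : SimpleGraph V) : ℕ :=
  sSup {n | ∃ A : (V ⊕ Fin (compNumber G)) → (V ⊕ Fin (compNumber G)) → Prop,
    Realizes G (compNumber G) A ∧ {v | ∀ u, ¬ A u v}.ncard = n}

/-- `C` is a maximal clique of `G`. -/
def IsMaximalClique {V : Type*} (G : SimpleGraph V) (C : Set V) : Prop :=
  G.IsClique C ∧ ∀ D : Set V, G.IsClique D → C ⊆ D → C = D

/-- The acyclic digraph `A` accompanies the minimum edge clique cover `𝒞`. -/
def Accompanies {V : Type*} (G : SimpleGraph V) (𝒞 : Finset (Set V))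
    (A : (V ⊕ Fin (compNumber G)) → (V ⊕ Fin (compNumber G)) → Prop) : Prop :=
  Realizes G (compNumber G) A ∧
  ∃ w : 𝒞 → (V ⊕ Fin (compNumber G)), Function.Injective w ∧
    (∀ C : 𝒞, ∀ v ∈ (C : Set V), A (Sum.inl v) (w C)) ∧
    {x | ∃ u, A u x} = Set.range w

/-- `𝒞` is an effective competition cover of `G`. -/
def IsEffectiveCompetitionCover {V : Type*} (G : SimpleGraph V) (𝒞 : Finset (Set V)) : Prop :=
  IsEdgeCliqueCover G 𝒞 ∧ 𝒞.card = eccNumber G ∧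
  (∀ C ∈ 𝒞, IsMaximalClique G C) ∧
  ∃ A : (V ⊕ Fin (compNumber G)) → (V ⊕ Fin (compNumber G)) → Prop, Accompanies G 𝒞 A

/-- The diamond graph: `K₄` minus the edge between vertices `2` and `3`. -/
def diamondGraph : SimpleGraph (Fin 4) where
  Adj i j := i ≠ j ∧ ¬(i = 2 ∧ j = 3) ∧ ¬(i = 3 ∧ j = 2)
  symm := by
    constructor
    rintro i j ⟨h, h1, h2⟩
    exact ⟨h.symm, fun ⟨a, b⟩ => h2 ⟨b, a⟩, fun ⟨a, b⟩ => h1 ⟨b, a⟩⟩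
  loopless := by
    constructor
    rintro i ⟨h, -⟩
    exact h rfl

/-- `G` contains `H` as an induced subgraph. -/
def ContainsInduced {V W : Type*} (G : SimpleGraph V) (H : SimpleGraph W) : Prop :=
  ∃ f : W ↪ V, ∀ a b, G.Adj (f a) (f b) ↔ H.Adj a b

/-- `G` is diamond-free: it has no induced diamond. -/
def DiamondFree {V : Type*} (G : SimpleGraph V) : Prop :=
  ¬ ContainsInduced G diamondGraph

/-- `G` is chordal: it has no induced cycle of length at least `4`. -/
def Chordal {V : Type*} (G : SimpleGraph V) : Prop :=
  ∀ n, 4 ≤ n → ¬ ContainsInduced G (SimpleGraph.cycleGraph n)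

/-- The edge `uv` is occupied by `C`: `C` is the unique maximal clique covering `uv`. -/
def Occupies {V : Type*} (G : SimpleGraph V) (C : Set V) (u v : V) : Prop :=
  G.Adj u v ∧ IsMaximalClique G C ∧ u ∈ C ∧ v ∈ C ∧
    ∀ C' : Set V, IsMaximalClique G C' → u ∈ C' → v ∈ C' → C' = C

/-- Every finite graph admits some realization. -/
lemma exists_realizes {V : Type*} [Fintype V] (G : SimpleGraph V) :
    ∃ (k : ℕ) (A : (V ⊕ Fin k) → (V ⊕ Fin k) → Prop), Realizes G k A := by
  classical
  set k := Fintype.card G.edgeSet with hk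
  obtain ⟨e⟩ : Nonempty (G.edgeSet ≃ Fin k) := ⟨Fintype.equivFin G.edgeSet⟩
  refine ⟨k, fun x y =>
      ∃ (u : V) (i : G.edgeSet), x = Sum.inl u ∧ y = Sum.inr (e i) ∧ u ∈ (i : Sym2 V),
    ?_, ?_⟩
  · -- acyclic: all arcs go from `inl` to `inr`
    intro v hv
    obtain ⟨b, hb, hbv⟩ := Relation.TransGen.head'_iff.1 hv
    obtain ⟨u, i, rfl, rfl, -⟩ := hb
    rcases Relation.ReflTransGen.cases_head hbv with h | ⟨c, hc, -⟩
    · exact Sum.inr_ne_inl h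
    · obtain ⟨u', i', h1, -, -⟩ := hc
      exact Sum.inr_ne_inl h1
  · ext x y
    constructor
    · rintro ⟨hne, z, ⟨u, i, rfl, rfl, hui⟩, ⟨v, j, rfl, hz, hvj⟩⟩
      have hij : i = j := e.injective (Sum.inr.inj hz.symm).symm
      subst hij
      have huv : u ≠ v := fun h => hne (by rw [h])
      have : (i : Sym2 V) = s(u, v) := (Sym2.mem_and_mem_iff huv).1 ⟨hui, hvj⟩
      have hadj : G.Adj u v := G.mem_edgeSet.1 (this ▸ i.2)
      exact ⟨u, v, hadj, rfl, rfl⟩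
    · rintro ⟨u, v, hadj, rfl, rfl⟩
      have hne : u ≠ v := hadj.ne
      refine ⟨fun h => hne (Sum.inl.inj h), Sum.inr (e ⟨s(u, v), G.mem_edgeSet.2 hadj⟩), ?_, ?_⟩
      · exact ⟨u, ⟨s(u, v), G.mem_edgeSet.2 hadj⟩, rfl, rfl, Sym2.mem_mk_left u v⟩
      · exact ⟨v, ⟨s(u, v), G.mem_edgeSet.2 hadj⟩, rfl, rfl, Sym2.mem_mk_right u v⟩

/-- `k(G) ≥ θ_e(G) − |V(G)| + p(G)`. -/
theorem stmt4 {V : Type*} [Fintype V] (G : SimpleGraph V) :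
    (eccNumber G : ℤ) - (Fintype.card V : ℤ) + (predatorIndex G : ℤ) ≤ (compNumber G : ℤ) := by
  classical
  obtain ⟨k0, A0, h0⟩ := exists_realizes G
  have hne : {k | ∃ A : (V ⊕ Fin k) → (V ⊕ Fin k) → Prop, Realizes G k A}.Nonempty :=
    ⟨k0, A0, h0⟩
  have hcomp : ∃ A : (V ⊕ Fin (compNumber G)) → (V ⊕ Fin (compNumber G)) → Prop,
      Realizes G (compNumber G) A := Nat.sInf_mem hne
  set N := compNumber G with hN
  obtain ⟨A1, hA1⟩ := hcomp
  set S : Set ℕ := {n | ∃ A : (V ⊕ Fin N) → (V ⊕ Fin N) → Prop,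
      Realizes G N A ∧ {v | ∀ u, ¬ A u v}.ncard = n} with hS
  have hSne : S.Nonempty := ⟨_, A1, hA1, rfl⟩
  have hSbdd : BddAbove S := by
    refine ⟨Fintype.card (V ⊕ Fin N), ?_⟩
    rintro n ⟨A, -, rfl⟩
    calc {v | ∀ u, ¬ A u v}.ncard ≤ (Set.univ : Set (V ⊕ Fin N)).ncard :=
          Set.ncard_le_ncard (Set.subset_univ _) Set.finite_univ
      _ = Fintype.card (V ⊕ Fin N) := by rw [Set.ncard_univ, Nat.card_eq_fintype_card]
  have hmem : predatorIndex G ∈ S := Nat.sSup_mem hSne hSbdd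
  obtain ⟨A, hA, hAcard⟩ := hmem
  -- the set of vertices of positive in-degree
  set T : Finset (V ⊕ Fin N) := Finset.univ.filter (fun x => ∃ u, A u x) with hT
  -- the edge clique cover induced by `A`
  set F : Finset (Set V) := T.image (fun x => {v : V | A (Sum.inl v) x}) with hF
  have hcover : IsEdgeCliqueCover G F := by
    constructor
    · intro C hC
      obtain ⟨x, -, rfl⟩ := Finset.mem_image.1 hC
      intro v hv w hw hvw
      have hadj : (competitionGraph A).Adj (Sum.inl v) (Sum.inl w) :=
        ⟨fun h => hvw (Sum.inl.inj h), x, hv, hw⟩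
      rw [hA.2] at hadj
      obtain ⟨u', v', h', hu', hv'⟩ := hadj
      rw [Sum.inl.injEq] at hu' hv'
      rwa [← hu', ← hv'] at h'
    · intro u v hadj
      have : (competitionGraph A).Adj (Sum.inl u) (Sum.inl v) := by
        rw [hA.2]; exact ⟨u, v, hadj, rfl, rfl⟩
      obtain ⟨-, z, hu, hv⟩ := this
      refine ⟨{w : V | A (Sum.inl w) z}, ?_, hu, hv⟩
      exact Finset.mem_image.2 ⟨z, Finset.mem_filter.2 ⟨Finset.mem_univ _, ⟨_, hu⟩⟩, rfl⟩
  have hecc : eccNumber G ≤ F.card := Nat.sInf_le ⟨F, hcover, rfl⟩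
  have hFT : F.card ≤ T.card := Finset.card_image_le
  -- the predator index counts the complement of `T`
  have hset : {v : V ⊕ Fin N | ∀ u, ¬ A u v} = ((Tᶜ : Finset (V ⊕ Fin N)) : Set (V ⊕ Fin N)) := by
    ext x
    simp only [Set.mem_setOf_eq, Finset.coe_compl, Set.mem_compl_iff, Finset.mem_coe, hT,
      Finset.mem_filter, Finset.mem_univ, true_and]
    push_neg
    rfl
  have hp : predatorIndex G = Fintype.card (V ⊕ Fin N) - T.card := by
    rw [← hAcard, hset, Set.ncard_coe_finset, Finset.card_compl]
  have hTle : T.card ≤ Fintype.card (V ⊕ Fin N) := Finset.card_le_univ T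
  have hcard : Fintype.card (V ⊕ Fin N) = Fintype.card V + N := by
    simp [Fintype.card_sum]
  have h1 : eccNumber G ≤ T.card := le_trans hecc hFT
  have h2 : predatorIndex G + T.card = Fintype.card V + N := by omega
  have hNN : (N : ℤ) = (compNumber G : ℤ) := by rw [hN]
  omega
end

section
/- Every chordal graph has a perfect elimination ordering. -/
namespace PEOAux

variable {V : Type*}

/-- connectivity within a set `T` -/
def Conn (G : SimpleGraph V) (T : Set V) : V → V → Prop :=
  Relation.ReflTransGen (fun u v => G.Adj u v ∧ u ∈ T ∧ v ∈ T)

lemma conn_symm {G : SimpleGraph V} {T : Set V} {u v : V} (h : Conn G T u v) : Conn G T v u := by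
  have hs : ∀ a b, (G.Adj a b ∧ a ∈ T ∧ b ∈ T) → (G.Adj b a ∧ b ∈ T ∧ a ∈ T) := by
    rintro a b ⟨hadj, ha, hb⟩
    exact ⟨hadj.symm, hb, ha⟩
  induction h with
  | refl => exact Relation.ReflTransGen.refl
  | tail _ hst ih => exact Relation.ReflTransGen.head (hs _ _ hst) ih

lemma conn_trans {G : SimpleGraph V} {T : Set V} {u v w : V} (h : Conn G T u v)
    (h' : Conn G T v w) : Conn G T u w := h.trans h'

lemma conn_mem_right {G : SimpleGraph V} {T : Set V} {u v : V} (h : Conn G T u v)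
    (hu : u ∈ T) : v ∈ T := by
  rcases h.cases_tail with h | ⟨c, _, _, _, hv⟩
  · exact h ▸ hu
  · exact hv

lemma conn_mono {G : SimpleGraph V} {T T' : Set V} (hT : T ⊆ T') {u v : V}
    (h : Conn G T u v) : Conn G T' u v := by
  induction h with
  | refl => exact Relation.ReflTransGen.refl
  | tail _ h ih => exact ih.tail ⟨h.1, hT h.2.1, hT h.2.2⟩

/-- a chain in `Sᶜ ∪ {x}` from `a` to something outside `S`, where `a ∉ S`, either avoids
`S` entirely or produces a neighbor of `x` reachable from `a` in `Sᶜ`. -/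
lemma chain_lemma {G : SimpleGraph V} {S : Set V} {a x b : V} (hx : x ∈ S) (ha : a ∉ S)
    (h : Conn G (Sᶜ ∪ {x}) a b) :
    (b ∉ S → Conn G Sᶜ a b ∨ ∃ u, Conn G Sᶜ a u ∧ G.Adj u x) ∧
    (b = x → ∃ u, Conn G Sᶜ a u ∧ G.Adj u x) := by
  induction h with
  | refl =>
    refine ⟨fun _ => Or.inl Relation.ReflTransGen.refl, fun hax => absurd (hax ▸ ha) (not_not_intro hx)⟩
  | @tail c b hac hstep ih =>
    obtain ⟨hadj, hcT, hbT⟩ := hstep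
    by_cases hcS : c ∈ S
    · have hcx : c = x := Set.mem_singleton_iff.mp (hcT.resolve_left fun hc => hc hcS)
      have D := ih.2 hcx
      exact ⟨fun _ => Or.inr D, fun _ => D⟩
    · rcases ih.1 hcS with hconn | D
      · refine ⟨fun hbS => Or.inl (hconn.tail ⟨hadj, hcS, hbS⟩), fun hbx => ⟨c, hconn, hbx ▸ hadj⟩⟩
      · exact ⟨fun _ => Or.inr D, fun _ => D⟩


/-- splice a walk -/
lemma splice {G : SimpleGraph V} {T : Set V} {x y : V} (f : ℕ → V) (p i d : ℕ)
    (hip : i + 1 + d ≤ p)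
    (hf0 : f 0 = x) (hfp : f p = y)
    (hstep : ∀ k < p, G.Adj (f k) (f (k+1)))
    (hint : ∀ k, 0 < k → k < p → f k ∈ T)
    (hadj : G.Adj (f i) (f (i+1+d))) :
    ∃ g : ℕ → V, g 0 = x ∧ g (p - d) = y ∧ (∀ k < p - d, G.Adj (g k) (g (k+1))) ∧
      (∀ k, 0 < k → k < p - d → g k ∈ T) := by
  refine ⟨fun k => if k ≤ i then f k else f (k + d), by simp [hf0], ?_, ?_, ?_⟩
  · have h1 : ¬ (p - d ≤ i) := by omega
    have h2 : p - d + d = p := by omega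
    simp only [h1, if_false, h2, hfp]
  · intro k hk
    by_cases h1 : k + 1 ≤ i
    · simp only [show k ≤ i by omega, if_true, h1, if_true]
      exact hstep k (by omega)
    · by_cases h2 : k ≤ i
      · have hki : k = i := by omega
        subst hki
        simp only [le_refl, if_true, if_neg h1]
        exact hadj
      · simp only [h2, if_false, h1, if_false]
        have : k + 1 + d = (k + d) + 1 := by omega
        rw [this]
        exact hstep (k + d) (by omega)
  · intro k hk0 hk
    by_cases h2 : k ≤ i
    · simp only [h2, if_true]
      exact hint k hk0 (by omega)
    · simp only [h2, if_false]
      exact hint (k + d) (by omega) (by omega)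

/-- Existence of a minimal (hence induced) path with interior in `T`. -/
lemma exists_induced_path {G : SimpleGraph V} {T : Set V} {x y : V}
    (hxy : x ≠ y) (hna : ¬ G.Adj x y) (hxT : x ∉ T) (hyT : y ∉ T)
    (hex : ∃ n, ∃ f : ℕ → V, f 0 = x ∧ f n = y ∧ (∀ i < n, G.Adj (f i) (f (i+1))) ∧
      (∀ i, 0 < i → i < n → f i ∈ T)) :
    ∃ p, ∃ f : ℕ → V, 2 ≤ p ∧ f 0 = x ∧ f p = y ∧ (∀ i < p, G.Adj (f i) (f (i+1))) ∧
      (∀ i, 0 < i → i < p → f i ∈ T) ∧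
      (∀ i j, i < j → j ≤ p → f i ≠ f j) ∧
      (∀ i j, i + 1 < j → j ≤ p → ¬ G.Adj (f i) (f j)) := by
  classical
  set P : ℕ → Prop := fun n => ∃ f : ℕ → V, f 0 = x ∧ f n = y ∧
    (∀ i < n, G.Adj (f i) (f (i+1))) ∧ (∀ i, 0 < i → i < n → f i ∈ T) with hP
  have hne : {n | P n}.Nonempty := hex
  set p := sInf {n | P n} with hp
  obtain ⟨f, hf0, hfp, hstep, hint⟩ : P p := Nat.sInf_mem hne
  have hmin : ∀ m, m < p → ¬ P m := by
    intro m hm hPm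
    have h := Nat.sInf_le (show m ∈ {n | P n} from hPm)
    omega
  have hp0 : p ≠ 0 := fun h => hxy (by rw [← hf0, ← hfp, h])
  have hp1 : p ≠ 1 := fun h => hna (by rw [← hf0, ← hfp, h]; exact hstep 0 (by omega))
  have hchord : ∀ i j, i + 1 < j → j ≤ p → ¬ G.Adj (f i) (f j) := by
    intro i j hij hjp hadj
    have hd : i + 1 + (j - i - 1) = j := by omega
    obtain ⟨g, hg⟩ := splice f p i (j - i - 1) (by omega) hf0 hfp hstep hint (by rw [hd]; exact hadj)
    have hPm : P (p - (j - i - 1)) := by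
      simp only [hP]; exact ⟨g, hg.1, hg.2.1, hg.2.2.1, hg.2.2.2⟩
    exact hmin _ (by omega) hPm
  have hinj : ∀ i j, i < j → j ≤ p → f i ≠ f j := by
    intro i j hij hjp heq
    rcases eq_or_lt_of_le hjp with rfl | hjp'
    · rcases Nat.eq_zero_or_pos i with rfl | hi0
      · exact hxy (hf0 ▸ hfp ▸ heq)
      · exact hyT (hfp ▸ heq ▸ hint i hi0 hij)
    · have hadj : G.Adj (f i) (f (i + 1 + (j - i))) := by
        have : i + 1 + (j - i) = j + 1 := by omega
        rw [this, heq]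
        exact hstep j hjp'
      obtain ⟨g, hg⟩ := splice f p i (j - i) (by omega) hf0 hfp hstep hint hadj
      have hPm : P (p - (j - i)) := by
        simp only [hP]; exact ⟨g, hg.1, hg.2.1, hg.2.2.1, hg.2.2.2⟩
      exact hmin _ (by omega) hPm
  exact ⟨p, f, by omega, hf0, hfp, hstep, hint, hinj, hchord⟩

/-- convert Conn to a function walk -/
lemma conn_to_walk {G : SimpleGraph V} {T : Set V} {u v : V} (h : Conn G T u v) :
    ∃ n, ∃ f : ℕ → V, f 0 = u ∧ f n = v ∧ (∀ i < n, G.Adj (f i) (f (i+1))) ∧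
      (∀ i, 0 < i → i ≤ n → f i ∈ T) := by
  induction h with
  | refl => exact ⟨0, fun _ => u, rfl, rfl, fun i h => absurd h (by omega), fun i h h' => by omega⟩
  | @tail c b hac hstep ih =>
    obtain ⟨n, f, hf0, hfn, hs, hm⟩ := ih
    refine ⟨n + 1, fun k => if k ≤ n then f k else b, by simp [hf0], ?_, ?_, ?_⟩
    · simp
    · intro i hi
      by_cases h1 : i + 1 ≤ n
      · simp only [show i ≤ n by omega, if_true, h1, if_true]
        exact hs i (by omega)
      · have hin : i = n := by omega
        subst hin
        simp only [le_refl, if_true, if_neg h1, hfn]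
        exact hstep.1
    · intro i hi0 hi
      by_cases h1 : i ≤ n
      · simp only [h1, if_true]
        rcases eq_or_lt_of_le h1 with rfl | h2
        · exact hfn ▸ hstep.2.1
        · exact hm i hi0 (by omega)
      · simp only [h1, if_false]
        exact hstep.2.2


lemma mod_helper (a n : ℕ) (h : a < 2 * n) (hn : 0 < n) :
    a % n = if a < n then a else a - n := by
  split
  · exact Nat.mod_eq_of_lt ‹_›
  · rw [Nat.mod_eq_sub_mod (by omega)]
    exact Nat.mod_eq_of_lt (by omega)

lemma cycle_adj_iff {n : ℕ} (hn : 4 ≤ n) (u v : Fin n) :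
    (SimpleGraph.cycleGraph n).Adj u v ↔
      ((v : ℕ) = u + 1 ∨ (u : ℕ) = v + 1 ∨ ((u : ℕ) = 0 ∧ (v : ℕ) = n - 1) ∨
        ((v : ℕ) = 0 ∧ (u : ℕ) = n - 1)) := by
  rw [SimpleGraph.cycleGraph_adj']
  have hu := u.isLt
  have hv := v.isLt
  have h1 : (u - v).val = (n - v.val + u.val) % n := by rw [Fin.sub_def]
  have h2 : (v - u).val = (n - u.val + v.val) % n := by rw [Fin.sub_def]
  rw [h1, h2, mod_helper _ n (by omega) (by omega), mod_helper _ n (by omega) (by omega)]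
  split <;> split <;> omega

lemma no_two_paths {G : SimpleGraph V} (hG : Chordal G) {A B : Set V} {x y : V}
    (hAB : ∀ u ∈ A, ∀ v ∈ B, ¬ G.Adj u v) (hABd : ∀ v, v ∈ A → v ∈ B → False)
    (hxA : x ∉ A) (hxB : x ∉ B) (hyA : y ∉ A) (hyB : y ∉ B)
    (hxy : x ≠ y) (hna : ¬ G.Adj x y)
    (hA : ∃ n, ∃ f : ℕ → V, f 0 = x ∧ f n = y ∧ (∀ i < n, G.Adj (f i) (f (i+1))) ∧
      (∀ i, 0 < i → i < n → f i ∈ A))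
    (hB : ∃ n, ∃ f : ℕ → V, f 0 = x ∧ f n = y ∧ (∀ i < n, G.Adj (f i) (f (i+1))) ∧
      (∀ i, 0 < i → i < n → f i ∈ B)) : False := by
  obtain ⟨p, fA, hp2, hA0, hAp, hAstep, hAint, hAinj, hAchord⟩ :=
    exists_induced_path hxy hna hxA hyA hA
  obtain ⟨q, fB, hq2, hB0, hBq, hBstep, hBint, hBinj, hBchord⟩ :=
    exists_induced_path hxy hna hxB hyB hB
  set n := p + q with hn
  have hn4 : 4 ≤ n := by omega
  set F : ℕ → V := fun i => if i ≤ p then fA i else fB (n - i) with hF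
  have hFle : ∀ i, i ≤ p → F i = fA i := by intro i hi; simp only [hF, if_pos hi]
  have hFgt : ∀ i, p < i → F i = fB (n - i) := by
    intro i hi; simp only [hF, if_neg (by omega : ¬ i ≤ p)]
  -- injectivity
  have inj' : ∀ i j, i < j → j < n → F i ≠ F j := by
    intro i j hij hjn heq
    by_cases hjp : j ≤ p
    · rw [hFle i (by omega), hFle j hjp] at heq
      exact hAinj i j hij hjp heq
    · by_cases hip : i ≤ p
      · rw [hFle i hip, hFgt j (by omega)] at heq
        have hBm : fB (n - j) ∈ B := hBint (n - j) (by omega) (by omega)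
        rcases Nat.eq_zero_or_pos i with rfl | hi0
        · exact hxB (hA0 ▸ heq ▸ hBm)
        · rcases eq_or_lt_of_le hip with rfl | hip'
          · exact hyB (hAp ▸ heq ▸ hBm)
          · exact hABd _ (heq ▸ hAint i hi0 hip') (heq ▸ hBm)
      · rw [hFgt i (by omega), hFgt j (by omega)] at heq
        exact hBinj (n - j) (n - i) (by omega) (by omega) heq.symm
  -- adjacency characterization
  have adj_iff : ∀ i j, i < j → j < n →
      (G.Adj (F i) (F j) ↔ (j = i + 1 ∨ (i = 0 ∧ j = n - 1))) := by
    intro i j hij hjn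
    constructor
    · intro hadj
      by_contra hcon
      push_neg at hcon
      obtain ⟨hji, hine⟩ := hcon
      by_cases hjp : j ≤ p
      · rw [hFle i (by omega), hFle j hjp] at hadj
        exact hAchord i j (by omega) hjp hadj
      · by_cases hip : i ≤ p
        · rw [hFle i hip, hFgt j (by omega)] at hadj
          rcases Nat.eq_zero_or_pos i with rfl | hi0
          · have hjne : j ≠ n - 1 := hine rfl
            rw [hA0, ← hB0] at hadj
            exact hBchord 0 (n - j) (by omega) (by omega) hadj
          · rcases eq_or_lt_of_le hip with rfl | hip'
            · rw [hAp, ← hBq] at hadj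
              exact hBchord (n - j) q (by omega) (le_refl q) hadj.symm
            · exact hAB _ (hAint i hi0 hip') _ (hBint (n - j) (by omega) (by omega)) hadj
        · rw [hFgt i (by omega), hFgt j (by omega)] at hadj
          exact hBchord (n - j) (n - i) (by omega) (by omega) hadj.symm
    · rintro (rfl | ⟨rfl, rfl⟩)
      · by_cases hip : i + 1 ≤ p
        · rw [hFle i (by omega), hFle (i+1) hip]
          exact hAstep i (by omega)
        · by_cases hip2 : i ≤ p
          · have hie : i = p := by omega
            subst hie
            rw [hFle i (le_refl i), hFgt (i+1) (by omega), hAp, ← hBq]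
            have he : n - (i + 1) = q - 1 := by omega
            rw [he]
            have hs := hBstep (q-1) (by omega)
            have hq' : q - 1 + 1 = q := by omega
            rw [hq'] at hs
            exact hs.symm
          · rw [hFgt i (by omega), hFgt (i+1) (by omega)]
            have h1 : n - i = (n - (i+1)) + 1 := by omega
            rw [h1]
            exact (hBstep (n - (i+1)) (by omega)).symm
      · rw [hFle 0 (by omega), hFgt (n-1) (by omega), hA0, ← hB0]
        have : n - (n - 1) = 1 := by omega
        rw [this]
        exact hBstep 0 (by omega)
  -- build embedding
  have hinj : Function.Injective (fun a : Fin n => F a.val) := by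
    intro a b heq
    simp only at heq
    rcases lt_trichotomy a.val b.val with h | h | h
    · exact absurd heq (inj' a.val b.val h b.isLt)
    · exact Fin.ext h
    · exact absurd heq.symm (inj' b.val a.val h a.isLt)
  have hlt : ∀ a b : Fin n, a.val < b.val →
      (G.Adj (F a.val) (F b.val) ↔ (SimpleGraph.cycleGraph n).Adj a b) := by
    intro a b h
    rw [adj_iff a.val b.val h b.isLt, cycle_adj_iff hn4]
    have := a.isLt
    have := b.isLt
    omega
  refine hG n hn4 ⟨⟨fun a : Fin n => F a.val, hinj⟩, ?_⟩
  intro a b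
  simp only [Function.Embedding.coeFn_mk]
  rcases lt_trichotomy a.val b.val with h | h | h
  · exact hlt a b h
  · have hab : a = b := Fin.ext h
    subst hab
    constructor
    · intro had; exact absurd had (G.irrefl)
    · intro had; exact absurd had ((SimpleGraph.cycleGraph n).irrefl)
  · rw [SimpleGraph.adj_comm, SimpleGraph.adj_comm (SimpleGraph.cycleGraph n)]
    exact hlt b a h


def IsSimplicial (G : SimpleGraph V) (v : V) : Prop :=
  ∀ x y, G.Adj v x → G.Adj v y → x ≠ y → G.Adj x y

lemma chordal_induce {G : SimpleGraph V} (hG : Chordal G) (s : Set V) :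
    Chordal (G.induce s) := by
  rintro n hn ⟨f, hf⟩
  refine hG n hn ⟨f.trans (Function.Embedding.subtype _), ?_⟩
  intro a b
  exact hf a b

lemma conn_upgrade {G : SimpleGraph V} {T : Set V} {a : V} :
    ∀ {u v : V}, Conn G T u v → Conn G T a u → Conn G {w | Conn G T a w} u v := by
  intro u v h hu
  induction h with
  | refl => exact Relation.ReflTransGen.refl
  | @tail c w hac hstep ih =>
    have hcA : Conn G T a c := conn_trans hu hac
    have hwA : Conn G T a w := hcA.tail hstep
    exact ih.tail ⟨hstep.1, hcA, hwA⟩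

lemma extend_walk {G : SimpleGraph V} {T : Set V} {x y u v : V}
    (hxu : G.Adj x u) (hvy : G.Adj v y) (h : Conn G T u v) (huT : u ∈ T) :
    ∃ n, ∃ f : ℕ → V, f 0 = x ∧ f n = y ∧ (∀ i < n, G.Adj (f i) (f (i+1))) ∧
      (∀ i, 0 < i → i < n → f i ∈ T) := by
  obtain ⟨n, f, hf0, hfn, hs, hm⟩ := conn_to_walk h
  refine ⟨n + 2, fun k => if k = 0 then x else if k ≤ n + 1 then f (k - 1) else y, by simp, ?_, ?_, ?_⟩
  · simp only [if_neg (by omega : ¬ (n + 2 = 0)), if_neg (by omega : ¬ (n + 2 ≤ n + 1))]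
  · intro i hi
    rcases Nat.eq_zero_or_pos i with rfl | hi0
    · simp only [if_pos rfl, if_neg (by omega : ¬ (0 + 1 = 0)), if_pos (by omega : 0 + 1 ≤ n + 1)]
      simpa [hf0] using hxu
    · by_cases h1 : i ≤ n
      · simp only [if_neg (by omega : ¬ i = 0), if_pos (by omega : i ≤ n + 1),
          if_neg (by omega : ¬ (i + 1 = 0)), if_pos (by omega : i + 1 ≤ n + 1)]
        have := hs (i - 1) (by omega)
        have he : i - 1 + 1 = i := by omega
        rw [he] at this
        have he2 : i + 1 - 1 = i := by omega
        rw [he2]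
        exact this
      · have hie : i = n + 1 := by omega
        subst hie
        simp only [if_neg (by omega : ¬ (n + 1 = 0)), if_pos (le_refl (n + 1)),
          if_neg (by omega : ¬ (n + 1 + 1 = 0)), if_neg (by omega : ¬ (n + 1 + 1 ≤ n + 1))]
        have he : n + 1 - 1 = n := by omega
        rw [he, hfn]
        exact hvy
  · intro i hi0 hi
    simp only [if_neg (by omega : ¬ i = 0), if_pos (by omega : i ≤ n + 1)]
    rcases Nat.eq_zero_or_pos (i - 1) with h1 | h1
    · rw [h1, hf0]
      exact huT
    · exact hm (i - 1) h1 (by omega)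

universe u

lemma exists_simplicial_in_side {n : ℕ}
    (IH : ∀ {W : Type u} [Finite W] (H : SimpleGraph W), Nat.card W ≤ n → Chordal H →
      (∀ u v : W, u ≠ v → H.Adj u v) ∨
        ∃ s t : W, s ≠ t ∧ ¬ H.Adj s t ∧ IsSimplicial H s ∧ IsSimplicial H t)
    {V : Type u} [Finite V] {G : SimpleGraph V} (hG : Chordal G) {A S : Set V} {a : V}
    (haA : a ∈ A) (hAS : ∀ v ∈ A, v ∉ S)
    (hclose : ∀ v ∈ A, ∀ u, G.Adj v u → u ∈ A ∪ S)
    (hclique : ∀ x ∈ S, ∀ y ∈ S, x ≠ y → G.Adj x y)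
    (hcard : Nat.card ↥(A ∪ S) ≤ n) :
    ∃ v ∈ A, IsSimplicial G v := by
  classical
  have hGA : Chordal (G.induce (A ∪ S)) := chordal_induce hG _
  have transfer : ∀ (v : V) (hv : v ∈ A ∪ S), v ∈ A →
      IsSimplicial (G.induce (A ∪ S)) ⟨v, hv⟩ → IsSimplicial G v := by
    intro v hv hvA hsimp x y hvx hvy hxy
    have hx : x ∈ A ∪ S := hclose v hvA x hvx
    have hy : y ∈ A ∪ S := hclose v hvA y hvy
    exact hsimp ⟨x, hx⟩ ⟨y, hy⟩ hvx hvy (fun h => hxy (congrArg Subtype.val h))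
  rcases IH (G.induce (A ∪ S)) hcard hGA with hcomp | ⟨s, t, hst, hnst, hs, ht⟩
  · refine ⟨a, haA, transfer a (Or.inl haA) haA ?_⟩
    intro x y hx hy hxy
    exact hcomp x y hxy
  · by_cases hsA : (s : V) ∈ A
    · exact ⟨s, hsA, transfer s s.2 hsA hs⟩
    · have hsS : (s : V) ∈ S := s.2.resolve_left hsA
      by_cases htA : (t : V) ∈ A
      · exact ⟨t, htA, transfer t t.2 htA ht⟩
      · have htS : (t : V) ∈ S := t.2.resolve_left htA
        exact absurd (hclique _ hsS _ htS (fun h => hst (Subtype.ext h))) hnst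

lemma dirac : ∀ (n : ℕ), ∀ {V : Type u} [Finite V] (G : SimpleGraph V), Nat.card V ≤ n →
    Chordal G →
    (∀ u v : V, u ≠ v → G.Adj u v) ∨
      ∃ s t : V, s ≠ t ∧ ¬ G.Adj s t ∧ IsSimplicial G s ∧ IsSimplicial G t := by
  intro n
  induction n with
  | zero =>
    intro V _ G hcard _
    left
    intro u v huv
    have : 0 < Nat.card V := @Nat.card_pos V ⟨u⟩ _
    omega
  | succ n ih =>
    intro V _ G hcard hG
    classical
    by_cases hcomp : ∀ u v : V, u ≠ v → G.Adj u v
    · exact Or.inl hcomp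
    right
    push_neg at hcomp
    obtain ⟨a, b, hab, hnab⟩ := hcomp
    have hSep0 : a ∉ ({a, b}ᶜ : Set V) ∧ b ∉ ({a, b}ᶜ : Set V) ∧
        ¬ Conn G (({a, b}ᶜ : Set V))ᶜ a b := by
      refine ⟨by simp, by simp, ?_⟩
      rw [compl_compl]
      intro h
      rcases Relation.ReflTransGen.cases_head h with heq | ⟨c, hstep, _⟩
      · exact hab heq
      · obtain ⟨hadj, _, hc⟩ := hstep
        simp only [Set.mem_insert_iff, Set.mem_singleton_iff] at hc
        rcases hc with rfl | rfl
        · exact G.loopless.irrefl _ hadj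
        · exact hnab hadj
    set K : Set ℕ := {m | ∃ S : Set V, (a ∉ S ∧ b ∉ S ∧ ¬ Conn G Sᶜ a b) ∧ S.ncard = m} with hK
    have hKne : K.Nonempty := ⟨_, _, hSep0, rfl⟩
    obtain ⟨S, hS, hScard⟩ := Nat.sInf_mem hKne
    have hmin : ∀ S' : Set V, (a ∉ S' ∧ b ∉ S' ∧ ¬ Conn G S'ᶜ a b) → sInf K ≤ S'.ncard := by
      intro S' h
      exact Nat.sInf_le ⟨S', h, rfl⟩
    obtain ⟨haS, hbS, hSsep⟩ := hS
    set A : Set V := {v | Conn G Sᶜ a v} with hA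
    set B : Set V := {v | Conn G Sᶜ b v} with hB
    have haA : a ∈ A := Relation.ReflTransGen.refl
    have hbB : b ∈ B := Relation.ReflTransGen.refl
    have hAS : ∀ v ∈ A, v ∉ S := fun v hv => conn_mem_right hv haS
    have hBS : ∀ v ∈ B, v ∉ S := fun v hv => conn_mem_right hv hbS
    have hdisj : ∀ v, v ∈ A → v ∈ B → False := fun v hvA hvB =>
      hSsep (conn_trans hvA (conn_symm hvB))
    have hcloseA : ∀ v ∈ A, ∀ u, G.Adj v u → u ∈ A ∪ S := by
      intro v hv u hadj
      by_cases huS : u ∈ S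
      · exact Or.inr huS
      · exact Or.inl (Relation.ReflTransGen.tail hv ⟨hadj, hAS v hv, huS⟩)
    have hcloseB : ∀ v ∈ B, ∀ u, G.Adj v u → u ∈ B ∪ S := by
      intro v hv u hadj
      by_cases huS : u ∈ S
      · exact Or.inr huS
      · exact Or.inl (Relation.ReflTransGen.tail hv ⟨hadj, hBS v hv, huS⟩)
    have hnbr : ∀ x ∈ S, (∃ u, u ∈ A ∧ G.Adj u x) ∧ (∃ w, w ∈ B ∧ G.Adj w x) := by
      intro x hx
      have hlt : (S \ {x}).ncard < S.ncard :=
        Set.ncard_diff_singleton_lt_of_mem hx (Set.toFinite S)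
      have hnsep : Conn G (S \ {x})ᶜ a b := by
        by_contra hcon
        have := hmin (S \ {x}) ⟨fun h => haS h.1, fun h => hbS h.1, hcon⟩
        omega
      have hcompl : (S \ {x})ᶜ = Sᶜ ∪ {x} := by
        ext v
        by_cases hv : v = x <;> simp [hv, hx]
      rw [hcompl] at hnsep
      constructor
      · rcases (chain_lemma hx haS hnsep).1 hbS with h | h
        · exact absurd h hSsep
        · obtain ⟨u, hu, hadj⟩ := h
          exact ⟨u, hu, hadj⟩
      · rcases (chain_lemma hx hbS (conn_symm hnsep)).1 haS with h | h
        · exact absurd (conn_symm h) hSsep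
        · obtain ⟨w, hw, hadj⟩ := h
          exact ⟨w, hw, hadj⟩
    have hABedges : ∀ u ∈ A, ∀ v ∈ B, ¬ G.Adj u v := by
      intro u hu v hv hadj
      rcases hcloseA u hu v hadj with h | h
      · exact hdisj v h hv
      · exact hBS v hv h
    have hclique : ∀ x ∈ S, ∀ y ∈ S, x ≠ y → G.Adj x y := by
      intro x hx y hy hxy
      by_contra hnadj
      obtain ⟨⟨ux, huxA, huxadj⟩, ⟨wx, hwxB, hwxadj⟩⟩ := hnbr x hx
      obtain ⟨⟨uy, huyA, huyadj⟩, ⟨wy, hwyB, hwyadj⟩⟩ := hnbr y hy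
      have hAwalk := extend_walk huxadj.symm huyadj
        (conn_upgrade (conn_trans (conn_symm huxA) huyA) huxA) huxA
      have hBwalk := extend_walk hwxadj.symm hwyadj
        (conn_upgrade (conn_trans (conn_symm hwxB) hwyB) hwxB) hwxB
      exact no_two_paths hG hABedges hdisj (fun h => hAS x h hx) (fun h => hBS x h hx)
        (fun h => hAS y h hy) (fun h => hBS y h hy) hxy hnadj hAwalk hBwalk
    have hbAS : b ∉ A ∪ S := by
      rintro (h | h)
      · exact hdisj b h hbB
      · exact hbS h
    have haBS : a ∉ B ∪ S := by
      rintro (h | h)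
      · exact hdisj a haA h
      · exact haS h
    have hcardA : Nat.card ↥(A ∪ S) ≤ n := by
      have hss : (A ∪ S) ⊂ Set.univ :=
        Set.ssubset_univ_iff.2 (fun h => hbAS (h ▸ Set.mem_univ b))
      have h2 := Set.ncard_lt_ncard hss (Set.toFinite _)
      rw [Set.ncard_univ] at h2
      rw [Nat.card_coe_set_eq]
      omega
    have hcardB : Nat.card ↥(B ∪ S) ≤ n := by
      have hss : (B ∪ S) ⊂ Set.univ :=
        Set.ssubset_univ_iff.2 (fun h => haBS (h ▸ Set.mem_univ a))
      have h2 := Set.ncard_lt_ncard hss (Set.toFinite _)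
      rw [Set.ncard_univ] at h2
      rw [Nat.card_coe_set_eq]
      omega
    obtain ⟨vA, hvA, hsimpA⟩ :=
      exists_simplicial_in_side @ih hG haA hAS hcloseA hclique hcardA
    obtain ⟨vB, hvB, hsimpB⟩ :=
      exists_simplicial_in_side @ih hG hbB hBS hcloseB hclique hcardB
    exact ⟨vA, vB, fun h => hdisj vA hvA (h ▸ hvB),
      fun hadj => hABedges vA hvA vB hvB hadj, hsimpA, hsimpB⟩


lemma exists_simplicial {V : Type u} [Finite V] [Nonempty V] (G : SimpleGraph V)
    (hG : Chordal G) : ∃ v, IsSimplicial G v := by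
  rcases dirac (Nat.card V) G le_rfl hG with hcomp | ⟨s, _, _, _, hs, _⟩
  · obtain ⟨v⟩ := ‹Nonempty V›
    exact ⟨v, fun x y _ _ hxy => hcomp x y hxy⟩
  · exact ⟨s, hs⟩

lemma peo : ∀ (n : ℕ), ∀ {V : Type u} [Fintype V] (G : SimpleGraph V), Fintype.card V = n →
    Chordal G →
    ∃ e : Fin n ≃ V, ∀ i j l : Fin n, i < j → i < l → j ≠ l →
      G.Adj (e i) (e j) → G.Adj (e i) (e l) → G.Adj (e j) (e l) := by
  intro n
  induction n with
  | zero =>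
    intro V _ G hcard _
    have : IsEmpty V := Fintype.card_eq_zero_iff.mp hcard
    exact ⟨Equiv.equivOfIsEmpty _ _, fun i => i.elim0⟩
  | succ n ihn =>
    intro V _ G hcard hG
    classical
    have hne : Nonempty V := Fintype.card_pos_iff.mp (by omega)
    obtain ⟨v, hv⟩ := exists_simplicial G hG
    set s : Set V := {v}ᶜ with hsdef
    have hcards : Fintype.card ↥s = n := by
      rw [← Nat.card_eq_fintype_card, Nat.card_coe_set_eq, hsdef]
      have h3 := Set.ncard_add_ncard_compl ({v} : Set V)
      rw [Set.ncard_singleton] at h3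
      have h4 : Nat.card V = Fintype.card V := Nat.card_eq_fintype_card
      omega
    have hGs : Chordal (G.induce s) := chordal_induce hG s
    obtain ⟨e', he'⟩ := ihn (G.induce s) hcards hGs
    set f : Fin (n+1) → V := fun i => Fin.cases v (fun j => (e' j : V)) i with hfdef
    have hinj : Function.Injective f := by
      intro i j hij
      rcases Fin.eq_zero_or_eq_succ i with rfl | ⟨i', rfl⟩ <;>
        rcases Fin.eq_zero_or_eq_succ j with rfl | ⟨j', rfl⟩
      · rfl
      · exact absurd hij.symm (e' j').2
      · exact absurd hij (e' i').2
      · have : (e' i' : V) = (e' j' : V) := hij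
        rw [e'.injective (Subtype.ext this)]
    have hbij : Function.Bijective f :=
      (Fintype.bijective_iff_injective_and_card f).2 ⟨hinj, by simp [hcard]⟩
    refine ⟨Equiv.ofBijective f hbij, ?_⟩
    intro i j l hij hil hjl hadj1 hadj2
    simp only [Equiv.ofBijective_apply] at *
    rcases Fin.eq_zero_or_eq_succ i with rfl | ⟨i', rfl⟩
    · obtain ⟨j', rfl⟩ := (Fin.eq_zero_or_eq_succ j).resolve_left
        (by rintro rfl; exact absurd hij (lt_irrefl _))
      obtain ⟨l', rfl⟩ := (Fin.eq_zero_or_eq_succ l).resolve_left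
        (by rintro rfl; exact absurd hil (lt_irrefl _))
      exact hv _ _ hadj1 hadj2 (fun h => hjl (hinj h))
    · obtain ⟨j', rfl⟩ := (Fin.eq_zero_or_eq_succ j).resolve_left
        (by rintro rfl; exact absurd hij (Fin.not_lt_zero _))
      obtain ⟨l', rfl⟩ := (Fin.eq_zero_or_eq_succ l).resolve_left
        (by rintro rfl; exact absurd hil (Fin.not_lt_zero _))
      have h1 : i' < j' := Fin.succ_lt_succ_iff.mp hij
      have h2 : i' < l' := Fin.succ_lt_succ_iff.mp hil
      have h3 : j' ≠ l' := fun h => hjl (by rw [h])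
      exact he' i' j' l' h1 h2 h3 hadj1 hadj2

end PEOAux

/-- every chordal graph has a perfect elimination ordering. -/
theorem stmt7 {V : Type*} [Fintype V] (G : SimpleGraph V) (hG : Chordal G) :
    ∃ e : Fin (Fintype.card V) ≃ V,
      ∀ i j l : Fin (Fintype.card V), i < j → i < l → j ≠ l →
        G.Adj (e i) (e j) → G.Adj (e i) (e l) → G.Adj (e j) (e l) :=
  PEOAux.peo (Fintype.card V) G rfl hG
end

section
/- Every chordal graph with at least one edge has an effective competition cover. -/
section Helpers
open SimpleGraph
variable {V : Type*}



/-- getVert equals support getElem -/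
lemma walk_getVert_eq_support_get {G : SimpleGraph V} {u v : V} (p : G.Walk u v) (i : ℕ)
    (hi : i ≤ p.length) : p.getVert i = p.support[i]'(by simp [Walk.length_support, Nat.lt_succ_of_le hi]) := by
  induction p generalizing i with
  | nil => simp [Walk.getVert]
  | cons h q ih =>
    cases i with
    | zero => simp [Walk.getVert]
    | succ n =>
      simp only [Walk.length_cons] at hi
      simp only [Walk.getVert_cons_succ, Walk.support_cons]
      rw [ih n (by omega)]
      simp

lemma path_getVert_inj {G : SimpleGraph V} {u v : V} {p : G.Walk u v} (hp : p.IsPath)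
    {i j : ℕ} (hi : i ≤ p.length) (hj : j ≤ p.length) (h : p.getVert i = p.getVert j) : i = j := by
  rw [walk_getVert_eq_support_get p i hi, walk_getVert_eq_support_get p j hj] at h
  have hnd := hp.support_nodup
  exact (List.Nodup.getElem_inj_iff hnd).mp h

lemma walk_length_drop {G : SimpleGraph V} {u v : V} (p : G.Walk u v) (n : ℕ) :
    (p.drop n).length = p.length - n := by
  induction p generalizing n with
  | nil => cases n <;> simp [Walk.drop]
  | cons h q ih =>
    cases n with
    | zero => simp [Walk.drop]
    | succ m => simpa [Walk.drop] using ih m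


/-- In an acyclic digraph on a finite nonempty type there is a vertex with out-degree 0. -/
lemma exists_sink {W : Type*} [Finite W] [Nonempty W] (A : W → W → Prop)
    (hA : ∀ v, ¬ Relation.TransGen A v v) : ∃ x, ∀ z, ¬ A x z := by
  by_contra hc
  push_neg at hc
  choose h hh using hc
  obtain ⟨x₀⟩ := ‹Nonempty W›
  have key : ∀ n, 1 ≤ n → ∀ y, Relation.TransGen A y (h^[n] y) := by
    intro n hn
    induction n with
    | zero => omega
    | succ m ih =>
      intro y
      rcases Nat.eq_or_lt_of_le hn with h1 | h1
      · simpa [← h1] using Relation.TransGen.single (hh y)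
      · have := ih (by omega) y
        rw [Function.iterate_succ_apply']
        exact this.tail (hh _)
  obtain ⟨i, j, hij, hfe⟩ := Finite.exists_ne_map_eq_of_infinite (fun n : ℕ => h^[n] x₀)
  wlog hlt : i < j generalizing i j
  · exact this j i hij.symm hfe.symm (by omega)
  have : h^[j - i] (h^[i] x₀) = h^[i] x₀ := by
    rw [← Function.iterate_add_apply]
    have : j - i + i = j := by omega
    rw [this, hfe]
  exact hA (h^[i] x₀) (by simpa [this] using key (j - i) (by omega) (h^[i] x₀))

/-- An edgeless graph has trivial reachability. -/
lemma reachable_eq_of_no_adj {H : SimpleGraph V} (h : ∀ x y, ¬ H.Adj x y) {u v : V}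
    (hr : H.Reachable u v) : u = v := by
  obtain ⟨p⟩ := hr
  cases p with
  | nil => rfl
  | cons ha _ => exact absurd ha (h _ _)

/-- There is a minimal-length chord-free path between reachable distinct vertices. -/
lemma exists_chordfree_path {H : SimpleGraph V} {u v : V} (hr : H.Reachable u v) :
    ∃ p : H.Walk u v, p.IsPath ∧
      (∀ q : H.Walk u v, p.length ≤ q.length) ∧
      (∀ i j : ℕ, i + 2 ≤ j → j ≤ p.length → ¬ H.Adj (p.getVert i) (p.getVert j)) := by
  classical
  obtain ⟨q0⟩ := hr
  let s : Set ℕ := {n | ∃ q : H.Walk u v, q.length = n}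
  have hs : s.Nonempty := ⟨q0.length, q0, rfl⟩
  obtain ⟨q, hq⟩ : ∃ q : H.Walk u v, q.length = sInf s := Nat.sInf_mem hs
  have hmin : ∀ r : H.Walk u v, q.length ≤ r.length := by
    intro r
    rw [hq]
    exact Nat.sInf_le ⟨r, rfl⟩
  -- replace by bypass to get a path
  set p := q.bypass with hp
  have hpl : p.length = q.length :=
    le_antisymm (q.length_bypass_le) (hmin p)
  have hminp : ∀ r : H.Walk u v, p.length ≤ r.length := fun r => hpl ▸ hmin r
  refine ⟨p, q.bypass_isPath, hminp, ?_⟩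
  intro i j hij hj hadj
  -- shortcut walk: u → getVert i → getVert j → v
  have hi : i ≤ p.length := by omega
  have hjl : j ≤ p.length := hj
  -- first part : from u to getVert i, via reverse-drop
  have e1 : p.reverse.getVert (p.length - i) = p.getVert i := by
    rw [Walk.getVert_reverse]
    congr 1
    omega
  let w1 : H.Walk u (p.getVert i) :=
    ((p.reverse.drop (p.length - i)).copy e1 rfl).reverse
  have hw1 : w1.length = i := by
    simp only [w1, Walk.length_reverse, Walk.length_copy]
    rw [walk_length_drop, Walk.length_reverse]
    omega
  let w2 : H.Walk (p.getVert i) v := Walk.cons hadj (p.drop j)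
  have hw2 : w2.length = 1 + (p.length - j) := by
    simp only [w2, Walk.length_cons]
    rw [walk_length_drop]
    omega
  have := hminp (w1.append w2)
  rw [Walk.length_append, hw1, hw2] at this
  omega

/-- The restriction of `G` to a vertex set `X` (as a graph on all of `V`). -/
def restrictG (G : SimpleGraph V) (X : Set V) : SimpleGraph V where
  Adj x y := G.Adj x y ∧ x ∈ X ∧ y ∈ X
  symm := ⟨by rintro x y ⟨h, hx, hy⟩; exact ⟨h.symm, hy, hx⟩⟩
  loopless := ⟨by rintro x ⟨h, -⟩; exact G.loopless.irrefl x h⟩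

lemma piece {G : SimpleGraph V} {X : Set V} {t t' : V}
    (htX : t ∉ X) (ht'X : t' ∉ X) (hne : t ≠ t') (hadjtt : ¬ G.Adj t t')
    (h1 : ∃ x ∈ X, G.Adj t x) (h2 : ∃ x ∈ X, G.Adj t' x)
    (hconn : ∀ x ∈ X, ∀ y ∈ X, (restrictG G X).Reachable x y) :
    ∃ (ℓ : ℕ) (c : ℕ → V), 2 ≤ ℓ ∧ c 0 = t ∧ c ℓ = t' ∧
      (∀ i, 0 < i → i < ℓ → c i ∈ X) ∧
      (∀ i, i < ℓ → G.Adj (c i) (c (i+1))) ∧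
      (∀ i j, i + 2 ≤ j → j ≤ ℓ → ¬ G.Adj (c i) (c j)) ∧
      (∀ i j, i ≤ ℓ → j ≤ ℓ → c i = c j → i = j) := by
  classical
  set H := restrictG G (X ∪ {t, t'}) with hH
  have hle : restrictG G X ≤ H := by
    rintro x y ⟨h, hx, hy⟩
    exact ⟨h, Or.inl hx, Or.inl hy⟩
  obtain ⟨x₁, hx₁X, hx₁⟩ := h1
  obtain ⟨x₂, hx₂X, hx₂⟩ := h2
  have hr : H.Reachable t t' := by
    have e1 : H.Adj t x₁ := ⟨hx₁, Or.inr (by simp), Or.inl hx₁X⟩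
    have e2 : H.Adj x₂ t' := ⟨hx₂.symm, Or.inl hx₂X, Or.inr (by simp)⟩
    exact (e1.reachable.trans ((hconn x₁ hx₁X x₂ hx₂X).mono hle)).trans e2.reachable
  obtain ⟨p, hpath, hmin, hchord⟩ := exists_chordfree_path hr
  refine ⟨p.length, p.getVert, ?_, p.getVert_zero, p.getVert_length, ?_, ?_, ?_, ?_⟩
  · -- length ≥ 2
    rcases Nat.lt_or_ge p.length 2 with h | h
    · interval_cases hl : p.length
      · exact absurd (Walk.eq_of_length_eq_zero hl) hne
      · exact absurd (Walk.adj_of_length_eq_one hl).1 hadjtt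
    · exact h
  · -- interior in X
    intro i h0 hil
    have hadj := p.adj_getVert_succ hil
    have hmem : p.getVert i ∈ X ∪ {t, t'} := hadj.2.1
    rcases hmem with h | h
    · exact h
    · exfalso
      rcases h with h | h
      · have : i = 0 := path_getVert_inj hpath (le_of_lt hil) (Nat.zero_le _)
          (by rw [h, p.getVert_zero])
        omega
      · have : i = p.length := path_getVert_inj hpath (le_of_lt hil) le_rfl
          (by rw [h, p.getVert_length])
        omega
  · exact fun i hi => (p.adj_getVert_succ hi).1
  · -- chord-free in G
    intro i j hij hj hadj
    have memb : ∀ k, k ≤ p.length → p.getVert k ∈ X ∪ {t, t'} := by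
      intro k hk
      rcases Nat.eq_or_lt_of_le hk with h | h
      · rw [h, p.getVert_length]; exact Or.inr (by simp)
      · rcases Nat.eq_zero_or_pos k with h0 | h0
        · rw [h0, p.getVert_zero]; exact Or.inr (by simp)
        · exact (p.adj_getVert_succ h).2.1
    exact hchord i j hij hj ⟨hadj, memb i (by omega), memb j hj⟩
  · exact fun i j hi hj h => path_getVert_inj hpath hi hj h

lemma fin_sub_val_one {m : ℕ} (hm : 2 ≤ m) (a b : Fin m) :
    ((a - b : Fin m)).val = 1 ↔ (a.val = b.val + 1 ∨ (a.val = 0 ∧ b.val + 1 = m)) := by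
  have ha := a.isLt
  have hb := b.isLt
  have key : ((a - b : Fin m)).val = (m - b.val + a.val) % m := by rw [Fin.sub_def]
  constructor
  · intro h1
    rcases lt_or_ge a.val b.val with h | h
    · rw [Nat.mod_eq_of_lt (by omega)] at key
      omega
    · rw [show m - b.val + a.val = m + (a.val - b.val) from by omega, Nat.add_mod_left,
        Nat.mod_eq_of_lt (by omega)] at key
      omega
  · rintro (h1 | ⟨h1, h2⟩)
    · rw [show m - b.val + a.val = m + (a.val - b.val) from by omega, Nat.add_mod_left,
        Nat.mod_eq_of_lt (by omega)] at key
      omega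
    · rw [Nat.mod_eq_of_lt (by omega)] at key
      omega

lemma cycle_of_two_pieces {G : SimpleGraph V} {A B : Set V} {t t' : V}
    (hABne : ∀ x ∈ A, ∀ y ∈ B, x ≠ y) (hABadj : ∀ x ∈ A, ∀ y ∈ B, ¬ G.Adj x y)
    (htB : t ∉ B) (ht'B : t' ∉ B) (htA : t ∉ A) (ht'A : t' ∉ A)
    {ℓ₁ ℓ₂ : ℕ} {c d : ℕ → V}
    (hl1 : 2 ≤ ℓ₁) (hc0 : c 0 = t) (hcl : c ℓ₁ = t')
    (hcX : ∀ i, 0 < i → i < ℓ₁ → c i ∈ A)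
    (hcadj : ∀ i, i < ℓ₁ → G.Adj (c i) (c (i+1)))
    (hcch : ∀ i j, i + 2 ≤ j → j ≤ ℓ₁ → ¬ G.Adj (c i) (c j))
    (hcinj : ∀ i j, i ≤ ℓ₁ → j ≤ ℓ₁ → c i = c j → i = j)
    (hl2 : 2 ≤ ℓ₂) (hd0 : d 0 = t) (hdl : d ℓ₂ = t')
    (hdX : ∀ i, 0 < i → i < ℓ₂ → d i ∈ B)
    (hdadj : ∀ i, i < ℓ₂ → G.Adj (d i) (d (i+1)))
    (hdch : ∀ i j, i + 2 ≤ j → j ≤ ℓ₂ → ¬ G.Adj (d i) (d j))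
    (hdinj : ∀ i j, i ≤ ℓ₂ → j ≤ ℓ₂ → d i = d j → i = j) :
    ContainsInduced G (SimpleGraph.cycleGraph (ℓ₁ + ℓ₂)) := by
  set m := ℓ₁ + ℓ₂ with hm
  set e : ℕ → V := fun i => if i ≤ ℓ₁ then c i else d (m - i) with he
  have he_le : ∀ i, i ≤ ℓ₁ → e i = c i := fun i hi => if_pos hi
  have he_gt : ∀ i, ℓ₁ < i → e i = d (m - i) := fun i hi => if_neg (by omega)
  -- adjacency helper for i < j < m
  have key : ∀ i j, i < j → j < m →
      (G.Adj (e i) (e j) ↔ (j = i + 1 ∨ (i = 0 ∧ j = m - 1))) := by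
    intro i j hij hjm
    rcases le_or_gt j ℓ₁ with hj | hj
    · -- both in c part
      rw [he_le i (by omega), he_le j hj]
      constructor
      · intro hadj
        by_contra hcon
        push_neg at hcon
        exact hcch i j (by omega) hj hadj
      · rintro (rfl | ⟨rfl, rfl⟩)
        · exact hcadj i (by omega)
        · omega
    · rcases Nat.lt_or_ge ℓ₁ i with hi | hi
      · -- both in d part
        rw [he_gt i hi, he_gt j hj]
        have hs : m - j < m - i := by omega
        have hsl : m - i ≤ ℓ₂ - 1 := by omega
        constructor
        · intro hadj
          by_contra hcon
          push_neg at hcon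
          exact hdch (m - j) (m - i) (by omega) (by omega) hadj.symm
        · rintro (rfl | ⟨rfl, rfl⟩)
          · have : m - i = (m - (i+1)) + 1 := by omega
            rw [this]
            exact (hdadj (m - (i+1)) (by omega)).symm
          · omega
      · -- i in c part, j in d part
        rw [he_le i hi, he_gt j hj]
        have hsj : 0 < m - j ∧ m - j ≤ ℓ₂ - 1 := by omega
        rcases Nat.eq_zero_or_pos i with rfl | hi0
        · -- i = 0 : t vs d (m-j)
          rw [hc0, ← hd0]
          constructor
          · intro hadj
            by_contra hcon
            push_neg at hcon
            have hne1 : m - j ≠ 1 := by omega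
            exact hdch 0 (m - j) (by omega) (by omega) hadj
          · rintro (h1 | ⟨-, rfl⟩)
            · omega
            · have : m - (m - 1) = 1 := by omega
              rw [this]
              exact hdadj 0 (by omega)
        · rcases Nat.eq_or_lt_of_le hi with rfl | hil
          · -- i = ℓ₁ : t' vs d (m-j)
            rw [hcl, ← hdl]
            constructor
            · intro hadj
              by_contra hcon
              push_neg at hcon
              have : m - j + 2 ≤ ℓ₂ := by omega
              exact hdch (m - j) ℓ₂ this le_rfl hadj.symm
            · rintro (rfl | ⟨h0, -⟩)
              · have : m - (i + 1) + 1 = ℓ₂ := by omega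
                rw [← this]
                exact (hdadj (m - (i+1)) (by omega)).symm
              · omega
          · -- interior of c : in A, vs in B
            have hA := hcX i hi0 hil
            have hB := hdX (m - j) hsj.1 (by omega)
            constructor
            · intro hadj
              exact absurd hadj (hABadj _ hA _ hB)
            · rintro (rfl | ⟨rfl, -⟩) <;> omega
  -- injectivity helper
  have einj : ∀ i j, i < j → j < m → e i ≠ e j := by
    intro i j hij hjm heq
    rcases le_or_gt j ℓ₁ with hj | hj
    · rw [he_le i (by omega), he_le j hj] at heq
      have := hcinj i j (by omega) hj heq
      omega
    · rcases Nat.lt_or_ge ℓ₁ i with hi | hi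
      · rw [he_gt i hi, he_gt j hj] at heq
        have := hdinj (m - i) (m - j) (by omega) (by omega) heq
        omega
      · rw [he_le i hi, he_gt j hj] at heq
        have hB := hdX (m - j) (by omega) (by omega)
        rcases Nat.eq_zero_or_pos i with rfl | hi0
        · rw [hc0] at heq; exact htB (heq ▸ hB)
        · rcases Nat.eq_or_lt_of_le hi with rfl | hil
          · rw [hcl] at heq; exact ht'B (heq ▸ hB)
          · exact hABne _ (hcX i hi0 hil) _ hB heq
  refine ⟨⟨fun a => e a.val, ?_⟩, ?_⟩
  · intro a b hab
    simp only at hab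
    by_contra hne
    rcases Nat.lt_or_ge a.val b.val with h | h
    · exact einj a.val b.val h b.isLt hab
    · rcases Nat.eq_or_lt_of_le h with h | h
      · exact hne (Fin.ext h.symm)
      · exact einj b.val a.val h a.isLt hab.symm
  · intro a b
    show G.Adj (e a.val) (e b.val) ↔ _
    rw [SimpleGraph.cycleGraph_adj', fin_sub_val_one (by omega), fin_sub_val_one (by omega)]
    rcases Nat.lt_trichotomy a.val b.val with h | h | h
    · rw [(key a.val b.val h b.isLt)]
      have := a.isLt; have := b.isLt
      constructor
      · rintro (h1 | ⟨h1, h2⟩) <;> omega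
      · rintro ((h1 | ⟨h1, h2⟩) | (h1 | ⟨h1, h2⟩)) <;> omega
    · have : a = b := Fin.ext h
      subst this
      simp only [SimpleGraph.irrefl, false_iff]
      rintro ((h1 | ⟨h1, h2⟩) | (h1 | ⟨h1, h2⟩)) <;> omega
    · have hiff := key b.val a.val h a.isLt
      rw [SimpleGraph.adj_comm] at hiff
      rw [hiff]
      have := a.isLt; have := b.isLt
      constructor
      · rintro (h1 | ⟨h1, h2⟩) <;> omega
      · rintro ((h1 | ⟨h1, h2⟩) | (h1 | ⟨h1, h2⟩)) <;> omega

/-- `v` is simplicial within `S`. -/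
def SimpIn (G : SimpleGraph V) (S : Finset V) (v : V) : Prop :=
  ∀ x ∈ S, ∀ y ∈ S, G.Adj v x → G.Adj v y → x ≠ y → G.Adj x y

lemma separator_structure {G : SimpleGraph V} (hG : Chordal G) (S : Finset V)
    {a b : V} (ha : a ∈ S) (hb : b ∈ S) (hne : a ≠ b) (hnadj : ¬ G.Adj a b) :
    ∃ (T : Finset V) (A B : Set V),
      T ⊆ S ∧ a ∉ T ∧ b ∉ T ∧ a ∈ A ∧ b ∈ B ∧
      (∀ x ∈ A, x ∈ S ∧ x ∉ T) ∧ (∀ x ∈ B, x ∈ S ∧ x ∉ T) ∧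
      (∀ x ∈ A, x ∉ B) ∧
      (∀ x ∈ A, ∀ y, y ∈ S → y ∉ T → G.Adj x y → y ∈ A) ∧
      (∀ x ∈ B, ∀ y, y ∈ S → y ∉ T → G.Adj x y → y ∈ B) ∧
      (∀ t ∈ T, ∀ t' ∈ T, t ≠ t' → G.Adj t t') := by
  classical
  set Sep : Finset V → Prop :=
    fun T => T ⊆ S ∧ a ∉ T ∧ b ∉ T ∧ ¬ (restrictG G (↑S \ ↑T)).Reachable a b with hSep
  have hT₀ : Sep ((S.erase a).erase b) := by
    refine ⟨(Finset.erase_subset _ _).trans (Finset.erase_subset _ _), ?_, ?_, ?_⟩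
    · intro h
      exact (Finset.mem_erase.mp ((Finset.erase_subset _ _) h)).1 rfl
    · intro h
      exact (Finset.mem_erase.mp h).1 rfl
    · intro hreach
      refine hne (reachable_eq_of_no_adj ?_ hreach)
      rintro x y ⟨hxy, hx, hy⟩
      have hxab : x = a ∨ x = b := by
        rcases hx with ⟨hxS, hxT⟩
        by_contra hc
        push_neg at hc
        exact hxT (by simp [Finset.mem_erase, hc.1, hc.2, hxS])
      have hyab : y = a ∨ y = b := by
        rcases hy with ⟨hyS, hyT⟩
        by_contra hc
        push_neg at hc
        exact hyT (by simp [Finset.mem_erase, hc.1, hc.2, hyS])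
      rcases hxab with rfl | rfl <;> rcases hyab with rfl | rfl
      · exact G.loopless.irrefl _ hxy
      · exact hnadj hxy
      · exact hnadj hxy.symm
      · exact G.loopless.irrefl _ hxy
  -- choose a minimum-cardinality separator
  obtain ⟨T, hTmem, hTmin⟩ := Finset.exists_min_image
    ((S.powerset).filter (fun T => Sep T)) Finset.card
    ⟨(S.erase a).erase b, Finset.mem_filter.mpr
      ⟨Finset.mem_powerset.mpr hT₀.1, hT₀⟩⟩
  have hTsep : Sep T := (Finset.mem_filter.mp hTmem).2
  obtain ⟨hTS, haT, hbT, hTreach⟩ := hTsep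
  set GT := restrictG G (↑S \ ↑T) with hGT
  set A : Set V := {x | (x ∈ S ∧ x ∉ T) ∧ GT.Reachable a x} with hA
  set B : Set V := {x | (x ∈ S ∧ x ∉ T) ∧ GT.Reachable b x} with hB
  have haA : a ∈ A := ⟨⟨ha, haT⟩, Reachable.refl a⟩
  have hbB : b ∈ B := ⟨⟨hb, hbT⟩, Reachable.refl b⟩
  have hAS : ∀ x ∈ A, x ∈ S ∧ x ∉ T := fun x hx => hx.1
  have hBS : ∀ x ∈ B, x ∈ S ∧ x ∉ T := fun x hx => hx.1
  have hABdisj : ∀ x ∈ A, x ∉ B := by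
    rintro x ⟨-, hax⟩ ⟨-, hbx⟩
    exact hTreach (hax.trans hbx.symm)
  have hAclosed : ∀ x ∈ A, ∀ y, y ∈ S → y ∉ T → G.Adj x y → y ∈ A := by
    rintro x ⟨hxm, hax⟩ y hyS hyT hxy
    exact ⟨⟨hyS, hyT⟩, hax.trans (Adj.reachable ⟨hxy, by exact ⟨hxm.1, hxm.2⟩, ⟨hyS, hyT⟩⟩)⟩
  have hBclosed : ∀ x ∈ B, ∀ y, y ∈ S → y ∉ T → G.Adj x y → y ∈ B := by
    rintro x ⟨hxm, hbx⟩ y hyS hyT hxy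
    exact ⟨⟨hyS, hyT⟩, hbx.trans (Adj.reachable ⟨hxy, by exact ⟨hxm.1, hxm.2⟩, ⟨hyS, hyT⟩⟩)⟩
  -- each separator vertex has neighbors in both components
  have hTnbr : ∀ (v : V) (C : Set V), v ∈ S → v ∉ T → v ∈ C →
      (∀ x ∈ C, ∀ y, y ∈ S → y ∉ T → G.Adj x y → y ∈ C) →
      GT.Reachable v v →  -- dummy
      ∀ t ∈ T, (∀ x ∈ C, ¬ G.Adj t x) →
      ∀ x, (restrictG G (↑S \ ↑(T.erase t))).Reachable v x → x ∈ C := by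
    intro v C hvS hvT hvC hclosed _ t htT hnonbr x hreach
    rw [reachable_iff_reflTransGen] at hreach
    induction hreach with
    | refl => exact hvC
    | tail hstep hadj ih =>
      rename_i c y
      rcases hadj with ⟨hcy, -, hyS, hyT'⟩
      have hyt : y = t ∨ y ∉ T := by
        by_contra hc
        push_neg at hc
        exact hyT' (Finset.mem_coe.mpr (Finset.mem_erase.mpr ⟨fun h => hc.1 h, hc.2⟩))
      rcases hyt with rfl | hyT
      · exact absurd hcy.symm (hnonbr c ih)
      · exact hclosed c ih y hyS hyT hcy
  have hTA : ∀ t ∈ T, ∃ x ∈ A, G.Adj t x := by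
    intro t htT
    by_contra hc
    push_neg at hc
    have hsep' : Sep (T.erase t) := by
      refine ⟨(Finset.erase_subset _ _).trans hTS, fun h => haT ((Finset.erase_subset _ _) h),
        fun h => hbT ((Finset.erase_subset _ _) h), fun hreach => ?_⟩
      have hbA := hTnbr a A ha haT haA hAclosed (Reachable.refl a) t htT
        (fun x hx hadj => hc x hx hadj) b hreach
      exact hABdisj b hbA hbB
    have := hTmin (T.erase t) (Finset.mem_filter.mpr
      ⟨Finset.mem_powerset.mpr ((Finset.erase_subset _ _).trans hTS), hsep'⟩)
    have := Finset.card_erase_lt_of_mem htT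
    omega
  have hTB : ∀ t ∈ T, ∃ x ∈ B, G.Adj t x := by
    intro t htT
    by_contra hc
    push_neg at hc
    have hsep' : Sep (T.erase t) := by
      refine ⟨(Finset.erase_subset _ _).trans hTS, fun h => haT ((Finset.erase_subset _ _) h),
        fun h => hbT ((Finset.erase_subset _ _) h), fun hreach => ?_⟩
      have haB := hTnbr b B hb hbT hbB hBclosed (Reachable.refl b) t htT
        (fun x hx hadj => hc x hx hadj) a hreach.symm
      exact hABdisj a haA haB
    have := hTmin (T.erase t) (Finset.mem_filter.mpr
      ⟨Finset.mem_powerset.mpr ((Finset.erase_subset _ _).trans hTS), hsep'⟩)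
    have := Finset.card_erase_lt_of_mem htT
    omega
  -- connectivity inside components
  have hconn : ∀ (v : V) (C : Set V), v ∈ C →
      (∀ x ∈ C, x ∈ S ∧ x ∉ T) →
      (∀ x ∈ C, ∀ y, y ∈ S → y ∉ T → G.Adj x y → y ∈ C) →
      (∀ x ∈ C, GT.Reachable v x → True) →
      (∀ x ∈ C, GT.Reachable v x) →
      ∀ x ∈ C, ∀ y ∈ C, (restrictG G C).Reachable x y := by
    intro v C hvC hCS hclosed _ hreachall
    have claim : ∀ x, GT.Reachable v x → x ∈ C → (restrictG G C).Reachable v x := by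
      intro x hreach
      rw [reachable_iff_reflTransGen] at hreach
      induction hreach with
      | refl => intro _; exact Reachable.refl v
      | tail hstep hadj ih =>
        rename_i c y
        intro hyC
        rcases hadj with ⟨hcy, ⟨hcS, hcT⟩, -⟩
        have hcC : c ∈ C := by
          -- c is reachable from v and adjacent to y ∈ C, use closure from y
          exact hclosed y hyC c hcS (by simpa using hcT) hcy.symm
        exact (ih hcC).trans (Adj.reachable ⟨hcy, hcC, hyC⟩)
    intro x hx y hy
    exact ((claim x (hreachall x hx) hx).symm).trans (claim y (hreachall y hy) hy)
  have hAconn : ∀ x ∈ A, ∀ y ∈ A, (restrictG G A).Reachable x y :=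
    hconn a A haA hAS hAclosed (fun _ _ _ => trivial) (fun x hx => hx.2)
  have hBconn : ∀ x ∈ B, ∀ y ∈ B, (restrictG G B).Reachable x y :=
    hconn b B hbB hBS hBclosed (fun _ _ _ => trivial) (fun x hx => hx.2)
  -- T is a clique
  have hTclique : ∀ t ∈ T, ∀ t' ∈ T, t ≠ t' → G.Adj t t' := by
    intro t htT t' ht'T htt' 
    by_contra hnn
    have htA : t ∉ A := fun h => (hAS t h).2 htT
    have ht'A : t' ∉ A := fun h => (hAS t' h).2 ht'T
    have htB : t ∉ B := fun h => (hBS t h).2 htT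
    have ht'B : t' ∉ B := fun h => (hBS t' h).2 ht'T
    obtain ⟨ℓ₁, c, hl1, hc0, hcl, hcX, hcadj, hcch, hcinj⟩ :=
      piece htA ht'A htt' hnn (hTA t htT) (hTA t' ht'T) hAconn
    obtain ⟨ℓ₂, d, hl2, hd0, hdl, hdX, hdadj, hdch, hdinj⟩ :=
      piece htB ht'B htt' hnn (hTB t htT) (hTB t' ht'T) hBconn
    have hcycle := cycle_of_two_pieces
      (fun x hx y hy hxy => hABdisj x hx (hxy ▸ hy))
      (fun x hx y hy hadj => hABdisj y
        (hAclosed x hx y (hBS y hy).1 (hBS y hy).2 hadj) hy)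
      htB ht'B htA ht'A hl1 hc0 hcl hcX hcadj hcch hcinj hl2 hd0 hdl hdX hdadj hdch hdinj
    exact hG (ℓ₁ + ℓ₂) (by omega) hcycle
  exact ⟨T, A, B, hTS, haT, hbT, haA, hbB, hAS, hBS, hABdisj, hAclosed, hBclosed, hTclique⟩

lemma chordal_Q {G : SimpleGraph V} (hG : Chordal G) :
    ∀ (n : ℕ) (S : Finset V), S.card = n →
      (∀ x ∈ S, ∀ y ∈ S, x ≠ y → G.Adj x y) ∨
      (∃ v ∈ S, ∃ w ∈ S, v ≠ w ∧ ¬ G.Adj v w ∧ SimpIn G S v ∧ SimpIn G S w) := by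
  classical
  intro n
  induction n using Nat.strong_induction_on with
  | _ n ih =>
    intro S hcard
    by_cases hcomp : ∀ x ∈ S, ∀ y ∈ S, x ≠ y → G.Adj x y
    · exact Or.inl hcomp
    right
    push_neg at hcomp
    obtain ⟨a, ha, b, hb, hne, hnadj⟩ := hcomp
    obtain ⟨T, A, B, hTS, haT, hbT, haA, hbB, hAS, hBS, hABdisj, hAclosed, hBclosed, hTclique⟩ :=
      separator_structure hG S ha hb hne hnadj
    -- a helper to extract a simplicial vertex inside a component
    have side : ∀ (v₀ : V) (C : Set V), v₀ ∈ C → (∀ x ∈ C, x ∈ S ∧ x ∉ T) →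
        (∀ x ∈ C, ∀ y, y ∈ S → y ∉ T → G.Adj x y → y ∈ C) →
        (∃ w₀, w₀ ∈ S ∧ w₀ ∉ C ∧ w₀ ∉ T) →
        ∃ v ∈ C, v ∈ S ∧ SimpIn G S v := by
      intro v₀ C hv₀ hCS hclosed hmiss
      set CF : Finset V := S.filter (fun x => x ∈ C) with hCF
      set U : Finset V := CF ∪ T with hU
      have hUS : U ⊆ S := by
        intro x hx
        rcases Finset.mem_union.mp hx with h | h
        · exact (Finset.mem_filter.mp h).1
        · exact hTS h
      obtain ⟨w₀, hw₀S, hw₀C, hw₀T⟩ := hmiss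
      have hUcard : U.card < n := by
        rw [← hcard]
        apply Finset.card_lt_card
        refine ⟨hUS, fun hsub => ?_⟩
        have := hsub hw₀S
        rcases Finset.mem_union.mp this with h | h
        · exact hw₀C (Finset.mem_filter.mp h).2
        · exact hw₀T h
      -- lifting simpliciality from U to S
      have hlift : ∀ v, v ∈ C → SimpIn G U v → SimpIn G S v := by
        intro v hvC hsimp x hxS y hyS hvx hvy hxy
        have hmem : ∀ z, z ∈ S → G.Adj v z → z ∈ U := by
          intro z hzS hvz
          by_cases hzT : z ∈ T
          · exact Finset.mem_union.mpr (Or.inr hzT)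
          · exact Finset.mem_union.mpr (Or.inl (Finset.mem_filter.mpr
              ⟨hzS, hclosed v hvC z hzS hzT hvz⟩))
        exact hsimp x (hmem x hxS hvx) y (hmem y hyS hvy) hvx hvy hxy
      rcases ih U.card hUcard U rfl with hUcomp | ⟨v, hvU, w, hwU, hvw, hvwadj, hsv, hsw⟩
      · -- U complete: v₀ is simplicial in U
        refine ⟨v₀, hv₀, (hCS v₀ hv₀).1, hlift v₀ hv₀ ?_⟩
        intro x hx y hy _ _ hxy
        exact hUcomp x hx y hy hxy
      · -- one of v, w lies in C
        have hvworC : v ∈ C ∨ w ∈ C := by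
          by_contra hcon
          push_neg at hcon
          have hvT : v ∈ T := by
            rcases Finset.mem_union.mp hvU with h | h
            · exact absurd (Finset.mem_filter.mp h).2 hcon.1
            · exact h
          have hwT : w ∈ T := by
            rcases Finset.mem_union.mp hwU with h | h
            · exact absurd (Finset.mem_filter.mp h).2 hcon.2
            · exact h
          exact hvwadj (hTclique v hvT w hwT hvw)
        rcases hvworC with h | h
        · exact ⟨v, h, hUS hvU, hlift v h hsv⟩
        · exact ⟨w, h, hUS hwU, hlift w h hsw⟩
    obtain ⟨va, hvaA, hvaS, hvasimp⟩ := side a A haA hAS hAclosed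
      ⟨b, hb, fun h => hABdisj b h hbB, hbT⟩
    obtain ⟨vb, hvbB, hvbS, hvbsimp⟩ := side b B hbB hBS hBclosed
      ⟨a, ha, fun h => hABdisj a haA h, haT⟩
    have hvane : va ≠ vb := by
      intro h
      exact hABdisj va hvaA (h ▸ hvbB)
    have hvanadj : ¬ G.Adj va vb := by
      intro h
      exact hABdisj vb (hAclosed va hvaA vb (hBS vb hvbB).1 (hBS vb hvbB).2 h) hvbB
    exact ⟨va, hvaS, vb, hvbS, hvane, hvanadj, hvasimp, hvbsimp⟩

lemma chordal_exists_simplicial {G : SimpleGraph V} (hG : Chordal G)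
    (S : Finset V) (hS : S.Nonempty) : ∃ v ∈ S, SimpIn G S v := by
  rcases chordal_Q hG S.card S rfl with h | ⟨v, hv, -, -, -, -, hsimp, -⟩
  · obtain ⟨v, hv⟩ := hS
    exact ⟨v, hv, fun x hx y hy _ _ hxy => h x hx y hy hxy⟩
  · exact ⟨v, hv, hsimp⟩

lemma chordal_peo_list {G : SimpleGraph V} (hG : Chordal G) :
    ∀ (n : ℕ) (S : Finset V), S.card = n →
      ∃ L : List V, L.Nodup ∧ (∀ v, v ∈ L ↔ v ∈ S) ∧
        ∀ (pre : List V) (v : V) (post : List V), L = pre ++ v :: post →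
          ∀ x ∈ post, ∀ y ∈ post, G.Adj v x → G.Adj v y → x ≠ y → G.Adj x y := by
  classical
  intro n
  induction n using Nat.strong_induction_on with
  | _ n ih =>
    intro S hcard
    rcases Finset.eq_empty_or_nonempty S with rfl | hS
    · refine ⟨[], List.nodup_nil, by simp, ?_⟩
      intro pre v post h
      exact absurd h.symm (by simp)
    obtain ⟨v, hvS, hvsimp⟩ := chordal_exists_simplicial hG S hS
    have hcard' : (S.erase v).card < n := by
      have := Finset.card_erase_lt_of_mem hvS
      omega
    obtain ⟨L', hnd', hmem', hprop'⟩ := ih (S.erase v).card hcard' (S.erase v) rfl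
    refine ⟨v :: L', ?_, ?_, ?_⟩
    · refine List.nodup_cons.mpr ⟨fun h => ?_, hnd'⟩
      exact (Finset.mem_erase.mp ((hmem' v).mp h)).1 rfl
    · intro u
      simp only [List.mem_cons, hmem' u, Finset.mem_erase]
      constructor
      · rintro (rfl | ⟨-, h⟩)
        · exact hvS
        · exact h
      · intro h
        by_cases huv : u = v
        · exact Or.inl huv
        · exact Or.inr ⟨huv, h⟩
    · intro pre w post heq x hx y hy hwx hwy hxy
      cases pre with
      | nil =>
        rw [List.nil_append] at heq
        injection heq with h1 h2
        subst h1
        subst h2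
        have hxS : x ∈ S := Finset.mem_of_mem_erase ((hmem' x).mp (by simp [hx]))
        have hyS : y ∈ S := Finset.mem_of_mem_erase ((hmem' y).mp (by simp [hy]))
        exact hvsimp x hxS y hyS hwx hwy hxy
      | cons p pre' =>
        simp only [List.cons_append] at heq
        have hL' : L' = pre' ++ w :: post := List.tail_eq_of_cons_eq heq
        exact hprop' pre' w post hL' x hx y hy hwx hwy hxy

/-- A perfect elimination ordering for a chordal graph. -/
lemma chordal_peo [Fintype V] {G : SimpleGraph V} (hG : Chordal G) :
    ∃ r : V → ℕ, Function.Injective r ∧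
      ∀ v x y, G.Adj v x → G.Adj v y → r v < r x → r v < r y → x ≠ y → G.Adj x y := by
  classical
  obtain ⟨L, hnd, hmem, hprop⟩ := chordal_peo_list hG (Finset.univ : Finset V).card _ rfl
  have hmemL : ∀ v : V, v ∈ L := fun v => (hmem v).mpr (Finset.mem_univ v)
  have hidx : ∀ v : V, L.idxOf v < L.length := fun v => List.idxOf_lt_length_iff.mpr (hmemL v)
  have hget : ∀ v : V, L[L.idxOf v]'(hidx v) = v := fun v => List.getElem_idxOf (hidx v)
  refine ⟨fun v => L.idxOf v, ?_, ?_⟩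
  · intro u v h
    dsimp only at h
    have h3 := getElem_congr_idx h (c := L) (w := hidx u)
    rw [hget u] at h3
    rw [h3]
    exact hget v
  · intro v x y hvx hvy hrx hry hxy
    simp only at hrx hry
    have hdropmem : ∀ u : V, L.idxOf v < L.idxOf u → u ∈ L.drop (L.idxOf v + 1) := by
      intro u hu
      have hlt : L.idxOf u - (L.idxOf v + 1) < (L.drop (L.idxOf v + 1)).length := by
        rw [List.length_drop]
        have := hidx u
        omega
      have h2 : (L.drop (L.idxOf v + 1))[L.idxOf u - (L.idxOf v + 1)]'hlt = u := by
        rw [List.getElem_drop]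
        rw [getElem_congr_idx (show L.idxOf v + 1 + (L.idxOf u - (L.idxOf v + 1)) = L.idxOf u
          by omega)]
        exact hget u
      rw [← h2]
      exact List.getElem_mem _
    have hsplit : L = L.take (L.idxOf v) ++ v :: L.drop (L.idxOf v + 1) := by
      conv_lhs => rw [← List.take_append_drop (L.idxOf v) L]
      congr 1
      rw [List.drop_eq_getElem_cons (hidx v), hget v]
    exact hprop (L.take (L.idxOf v)) v (L.drop (L.idxOf v + 1)) hsplit
      x (hdropmem x hrx) y (hdropmem y hry) hvx hvy hxy

lemma cover_exists [Fintype V] (G : SimpleGraph V) : ∃ F : Finset (Set V), IsEdgeCliqueCover G F := by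
  classical
  refine ⟨(Finset.univ : Finset (V × V)).image
    (fun p => if G.Adj p.1 p.2 then ({p.1, p.2} : Set V) else ∅), ?_, ?_⟩
  · intro C hC
    obtain ⟨p, -, rfl⟩ := Finset.mem_image.mp hC
    split_ifs with h
    · intro x hx y hy hxy
      rcases hx with rfl | rfl <;> rcases hy with rfl | rfl
      · exact absurd rfl hxy
      · exact h
      · exact h.symm
      · exact absurd rfl hxy
    · intro x hx
      exact absurd hx (Set.notMem_empty x)
  · intro u v huv
    refine ⟨if G.Adj u v then ({u, v} : Set V) else ∅, Finset.mem_image.mpr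
      ⟨(u, v), Finset.mem_univ _, rfl⟩, ?_⟩
    rw [if_pos huv]
    exact ⟨Set.mem_insert _ _, Set.mem_insert_of_mem _ rfl⟩

lemma exists_maximal_clique_ext [Fintype V] {G : SimpleGraph V} {C : Set V}
    (hC : G.IsClique C) : ∃ D : Set V, IsMaximalClique G D ∧ C ⊆ D := by
  classical
  set s : Set ℕ := {n | ∃ D : Set V, G.IsClique D ∧ C ⊆ D ∧ D.ncard = n} with hs
  have hsne : s.Nonempty := ⟨C.ncard, C, hC, subset_rfl, rfl⟩
  have hbdd : BddAbove s := by
    refine ⟨Fintype.card V, ?_⟩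
    rintro n ⟨D, -, -, rfl⟩
    have := Set.ncard_le_ncard (Set.subset_univ D) Set.finite_univ
    simpa [Set.ncard_univ, Nat.card_eq_fintype_card] using this
  obtain ⟨D, hDclique, hCD, hDcard⟩ := Nat.sSup_mem hsne hbdd
  refine ⟨D, ⟨hDclique, ?_⟩, hCD⟩
  intro E hE hDE
  by_contra hne
  have hss : D ⊂ E := ⟨hDE, fun h => hne (le_antisymm hDE h)⟩
  have hlt : D.ncard < E.ncard := Set.ncard_lt_ncard hss (Set.toFinite E)
  have : E.ncard ∈ s := ⟨E, hE, hCD.trans hDE, rfl⟩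
  have := le_csSup hbdd this
  omega

lemma exists_min_maxclique_cover [Fintype V] (G : SimpleGraph V) :
    ∃ 𝒞 : Finset (Set V), IsEdgeCliqueCover G 𝒞 ∧ 𝒞.card = eccNumber G ∧
      (∀ C ∈ 𝒞, IsMaximalClique G C) ∧
      (∀ C ∈ 𝒞, ∃ x y, x ∈ C ∧ y ∈ C ∧ G.Adj x y) := by
  classical
  obtain ⟨F₀, hF₀⟩ := cover_exists G
  have hsetne : {n | ∃ F : Finset (Set V), IsEdgeCliqueCover G F ∧ F.card = n}.Nonempty :=
    ⟨F₀.card, F₀, hF₀, rfl⟩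
  obtain ⟨F, hFcov, hFcard⟩ := Nat.sInf_mem hsetne
  have hFecc : F.card = eccNumber G := hFcard
  set ext : Set V → Set V := fun C =>
    if h : G.IsClique C then Classical.choose (exists_maximal_clique_ext h) else C with hext
  have hext_max : ∀ C : Set V, G.IsClique C → IsMaximalClique G (ext C) := by
    intro C h
    rw [hext]
    simp only [dif_pos h]
    exact (Classical.choose_spec (exists_maximal_clique_ext h)).1
  have hext_sub : ∀ C : Set V, G.IsClique C → C ⊆ ext C := by
    intro C h
    rw [hext]
    simp only [dif_pos h]
    exact (Classical.choose_spec (exists_maximal_clique_ext h)).2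
  set 𝒞 := F.image ext with h𝒞
  have hcov : IsEdgeCliqueCover G 𝒞 := by
    constructor
    · intro C hC
      obtain ⟨C₀, hC₀, rfl⟩ := Finset.mem_image.mp hC
      exact (hext_max C₀ (hFcov.1 C₀ hC₀)).1
    · intro u v huv
      obtain ⟨C₀, hC₀, hu, hv⟩ := hFcov.2 u v huv
      exact ⟨ext C₀, Finset.mem_image_of_mem ext hC₀,
        hext_sub C₀ (hFcov.1 C₀ hC₀) hu, hext_sub C₀ (hFcov.1 C₀ hC₀) hv⟩
  have hcard : 𝒞.card = eccNumber G := by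
    have h1 : 𝒞.card ≤ F.card := Finset.card_image_le
    have h2 : eccNumber G ≤ 𝒞.card := Nat.sInf_le ⟨𝒞, hcov, rfl⟩
    omega
  refine ⟨𝒞, hcov, hcard, ?_, ?_⟩
  · intro C hC
    obtain ⟨C₀, hC₀, rfl⟩ := Finset.mem_image.mp hC
    exact hext_max C₀ (hFcov.1 C₀ hC₀)
  · intro C hC
    by_contra hc
    push_neg at hc
    have hcov' : IsEdgeCliqueCover G (𝒞.erase C) := by
      constructor
      · intro D hD
        exact hcov.1 D (Finset.mem_of_mem_erase hD)
      · intro u v huv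
        obtain ⟨D, hD, hu, hv⟩ := hcov.2 u v huv
        refine ⟨D, Finset.mem_erase.mpr ⟨?_, hD⟩, hu, hv⟩
        rintro rfl
        exact hc u v hu hv huv
    have h1 : eccNumber G ≤ (𝒞.erase C).card := Nat.sInf_le ⟨_, hcov', rfl⟩
    have h2 : (𝒞.erase C).card = 𝒞.card - 1 := Finset.card_erase_of_mem hC
    have h3 : 1 ≤ 𝒞.card := Finset.card_pos.mpr ⟨C, hC⟩
    omega

/-- Two maximal cliques sharing a common r-minimum coincide (uses the PEO property). -/
lemma minima_distinct {G : SimpleGraph V} {r : V → ℕ} (hrinj : Function.Injective r)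
    (hpeo : ∀ v x y, G.Adj v x → G.Adj v y → r v < r x → r v < r y → x ≠ y → G.Adj x y)
    {C D : Set V} (hC : IsMaximalClique G C) (hD : IsMaximalClique G D)
    {u : V} (huC : u ∈ C) (huD : u ∈ D)
    (hminC : ∀ x ∈ C, r u ≤ r x) (hminD : ∀ x ∈ D, r u ≤ r x) : C = D := by
  have hclique : G.IsClique (C ∪ D) := by
    intro x hx y hy hxy
    rcases hx with hx | hx <;> rcases hy with hy | hy
    · exact hC.1 hx hy hxy
    · rcases eq_or_ne x u with rfl | hxu
      · exact hD.1 huD hy hxy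
      · rcases eq_or_ne y u with rfl | hyu
        · exact (hC.1 huC hx (Ne.symm hxu)).symm
        · have h1 : G.Adj u x := hC.1 huC hx (Ne.symm hxu)
          have h2 : G.Adj u y := hD.1 huD hy (Ne.symm hyu)
          have hx' : r u < r x := lt_of_le_of_ne (hminC x hx) (fun h => hxu (hrinj h.symm))
          have hy' : r u < r y := lt_of_le_of_ne (hminD y hy) (fun h => hyu (hrinj h.symm))
          exact hpeo u x y h1 h2 hx' hy' hxy
    · rcases eq_or_ne x u with rfl | hxu
      · exact hC.1 huC hy hxy
      · rcases eq_or_ne y u with rfl | hyu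
        · exact (hD.1 huD hx (Ne.symm hxu)).symm
        · have h1 : G.Adj u x := hD.1 huD hx (Ne.symm hxu)
          have h2 : G.Adj u y := hC.1 huC hy (Ne.symm hyu)
          have hx' : r u < r x := lt_of_le_of_ne (hminD x hx) (fun h => hxu (hrinj h.symm))
          have hy' : r u < r y := lt_of_le_of_ne (hminC y hy) (fun h => hyu (hrinj h.symm))
          exact hpeo u x y h1 h2 hx' hy' hxy
    · exact hD.1 hx hy hxy
  have h1 : C = C ∪ D := hC.2 _ hclique Set.subset_union_left
  have h2 : D = C ∪ D := hD.2 _ hclique Set.subset_union_right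
  exact h1.trans h2.symm

lemma construct_realizer {G : SimpleGraph V} {𝒞 : Finset (Set V)} {r : V → ℕ} {minv : Set V → V}
    (hrinj : Function.Injective r)
    (hpeo : ∀ v x y, G.Adj v x → G.Adj v y → r v < r x → r v < r y → x ≠ y → G.Adj x y)
    (hcov : IsEdgeCliqueCover G 𝒞)
    (hmax : ∀ C ∈ 𝒞, IsMaximalClique G C)
    (hedgeC : ∀ C ∈ 𝒞, ∃ x y, x ∈ C ∧ y ∈ C ∧ G.Adj x y)
    (hminv : ∀ C ∈ 𝒞, minv C ∈ C ∧ ∀ x ∈ C, r (minv C) ≤ r x)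
    (k : ℕ) (s : V ⊕ Fin k) (ν : V ⊕ Fin k → ℕ)
    (hνs : ∀ C ∈ 𝒞, ∀ u ∈ C, ν s < ν (Sum.inl u))
    (hνmono : ∀ C ∈ 𝒞, ∀ D ∈ 𝒞, ∀ u ∈ C, r (minv D) < r (minv C) →
      ν (Sum.inl (minv D)) < ν (Sum.inl u))
    (hsnotin : ∀ C ∈ 𝒞, ∀ u ∈ C, Sum.inl u ≠ s) :
    ∃ A : (V ⊕ Fin k) → (V ⊕ Fin k) → Prop, Realizes G k A ∧
      ∃ w : {C // C ∈ 𝒞} → (V ⊕ Fin k), Function.Injective w ∧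
        (∀ C : {C // C ∈ 𝒞}, ∀ v ∈ (C : Set V), A (Sum.inl v) (w C)) ∧
        {x | ∃ u, A u x} = Set.range w := by
  classical
  -- the key: distinct cliques have distinct minima ranks
  have hmd : ∀ C : {C // C ∈ 𝒞}, ∀ D : {D // D ∈ 𝒞},
      r (minv ↑C) = r (minv ↑D) → C = D := by
    intro C D h
    have hv : minv ↑C = minv ↑D := hrinj h
    have := minima_distinct hrinj hpeo (hmax ↑C C.2) (hmax ↑D D.2)
      (hminv ↑C C.2).1 (hv ▸ (hminv ↑D D.2).1)
      (hminv ↑C C.2).2 (hv ▸ (hminv ↑D D.2).2)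
    exact Subtype.ext this
  -- choose predecessors
  have hgex : ∀ C : {C // C ∈ 𝒞}, ∃ y : V ⊕ Fin k,
      (y = s ∧ ∀ D : {D // D ∈ 𝒞}, ¬ r (minv ↑D) < r (minv ↑C)) ∨
      (∃ D : {D // D ∈ 𝒞}, y = Sum.inl (minv ↑D) ∧ r (minv ↑D) < r (minv ↑C) ∧
        ∀ E : {E // E ∈ 𝒞}, r (minv ↑E) < r (minv ↑C) → r (minv ↑E) ≤ r (minv ↑D)) := by
    intro C
    by_cases h : ∃ D : {D // D ∈ 𝒞}, r (minv ↑D) < r (minv ↑C)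
    · obtain ⟨D₀, hD₀⟩ := h
      obtain ⟨D, hDmem, hDmax⟩ := Finset.exists_max_image
        (𝒞.attach.filter (fun D : {C // C ∈ 𝒞} => r (minv (D : Set V)) < r (minv ↑C)))
        (fun D : {C // C ∈ 𝒞} => r (minv (D : Set V)))
        ⟨D₀, Finset.mem_filter.mpr ⟨Finset.mem_attach _ _, hD₀⟩⟩
      refine ⟨Sum.inl (minv ↑D), Or.inr ⟨D, rfl, (Finset.mem_filter.mp hDmem).2, ?_⟩⟩
      intro E hE
      exact hDmax E (Finset.mem_filter.mpr ⟨Finset.mem_attach _ _, hE⟩)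
    · push_neg at h
      exact ⟨s, Or.inl ⟨rfl, fun D => not_lt.mpr (h D)⟩⟩
  choose g hg using hgex
  -- key facts about g
  have hglt : ∀ C : {C // C ∈ 𝒞}, ∀ u ∈ (C : Set V), ν (g C) < ν (Sum.inl u) := by
    intro C u hu
    rcases hg C with ⟨hgs, -⟩ | ⟨D, hgD, hlt, -⟩
    · rw [hgs]
      exact hνs ↑C C.2 u hu
    · rw [hgD]
      exact hνmono ↑C C.2 ↑D D.2 u hu hlt
  have hgnotmin : ∀ C D : {C // C ∈ 𝒞}, g C = Sum.inl (minv ↑D) → r (minv ↑D) < r (minv ↑C) := by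
    intro C D h
    rcases hg C with ⟨hgs, -⟩ | ⟨E, hgE, hlt, -⟩
    · exfalso
      exact hsnotin ↑D D.2 (minv ↑D) (hminv ↑D D.2).1 (by rw [← h, hgs])
    · rw [hgE] at h
      have h2 : minv (↑E : Set V) = minv ↑D := Sum.inl.inj h
      rwa [← h2]
  have haux : ∀ C C' : {C // C ∈ 𝒞}, r (minv ↑C) < r (minv ↑C') → g C = g C' → False := by
    intro C C' hlt heq
    rcases hg C' with ⟨hgs', hnone'⟩ | ⟨D', hgD', hDlt', hDmax'⟩
    · exact hnone' C hlt
    · rcases hg C with ⟨hgs, hnone⟩ | ⟨D, hgD, hDlt, hDmax⟩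
      · exact hsnotin ↑D' D'.2 _ (hminv ↑D' D'.2).1 (by rw [← hgD', ← heq, hgs])
      · have h2 : minv (↑D : Set V) = minv ↑D' := Sum.inl.inj (by rw [← hgD, ← hgD', heq])
        have hDD' : D = D' := hmd D D' (by rw [h2])
        subst hDD'
        exact absurd (hDmax' C hlt) (not_le.mpr hDlt)
  have hginj : Function.Injective g := by
    intro C C' heq
    by_contra hne
    have hrne : r (minv ↑C) ≠ r (minv ↑C') := fun h => hne (hmd C C' h)
    rcases lt_or_gt_of_ne hrne with hlt | hlt
    · exact absurd heq (fun h => haux C C' hlt h)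
    · exact absurd heq.symm (fun h => haux C' C hlt h)
  -- the digraph
  set A : (V ⊕ Fin k) → (V ⊕ Fin k) → Prop :=
    fun x y => ∃ C : {C // C ∈ 𝒞}, (∃ u ∈ (C : Set V), x = Sum.inl u) ∧ y = g C with hAdef
  have hacyc : Digraph.Acyclic A := by
    intro v hv
    have hdec : ∀ x y, Relation.TransGen A x y → ν y < ν x := by
      intro x y h
      induction h with
      | single h =>
        obtain ⟨C, ⟨u, hu, rfl⟩, rfl⟩ := h
        exact hglt C u hu
      | tail hsteps hstep ih =>
        obtain ⟨C, ⟨u, hu, rfl⟩, rfl⟩ := hstep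
        exact lt_trans (hglt C u hu) (lt_of_le_of_lt (le_refl _) ih)
    exact absurd (hdec v v hv) (lt_irrefl _)
  have hcomp : competitionGraph A = addIsolated G k := by
    ext x y
    show (x ≠ y ∧ ∃ z, A x z ∧ A y z) ↔ _
    constructor
    · rintro ⟨hxy, z, hz1, hz2⟩
      obtain ⟨C, ⟨u, hu, hx⟩, hgC⟩ := hz1
      obtain ⟨C', ⟨v', hv', hy⟩, hgC'⟩ := hz2
      subst hx
      subst hy
      have hCC' : C' = C := hginj (by rw [← hgC, ← hgC'])
      subst hCC'
      have huv : u ≠ v' := fun h => hxy (by rw [h])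
      exact ⟨u, v', (hmax _ C'.2).1 hu hv' huv, rfl, rfl⟩
    · rintro ⟨u, v', huv, rfl, rfl⟩
      obtain ⟨C, hC, hu, hv⟩ := hcov.2 u v' huv
      refine ⟨fun h => G.ne_of_adj huv (Sum.inl.inj h), g ⟨C, hC⟩,
        ⟨⟨C, hC⟩, ⟨u, hu, rfl⟩, rfl⟩, ⟨⟨C, hC⟩, ⟨v', hv, rfl⟩, rfl⟩⟩
  refine ⟨A, ⟨hacyc, hcomp⟩, g, hginj, ?_, ?_⟩
  · intro C v hv
    exact ⟨C, ⟨v, hv, rfl⟩, rfl⟩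
  · ext x
    constructor
    · rintro ⟨u, C, -, rfl⟩
      exact ⟨C, rfl⟩
    · rintro ⟨C, rfl⟩
      obtain ⟨a, b, ha, hb, hab⟩ := hedgeC ↑C C.2
      exact ⟨Sum.inl a, C, ⟨a, ha, rfl⟩, rfl⟩

lemma accompany_of_realizer {G : SimpleGraph V} {𝒞 : Finset (Set V)} (k : ℕ)
    (hk : compNumber G = k)
    (h : ∃ A : (V ⊕ Fin k) → (V ⊕ Fin k) → Prop, Realizes G k A ∧
      ∃ w : {C // C ∈ 𝒞} → (V ⊕ Fin k), Function.Injective w ∧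
        (∀ C : {C // C ∈ 𝒞}, ∀ v ∈ (C : Set V), A (Sum.inl v) (w C)) ∧
        {x | ∃ u, A u x} = Set.range w) :
    ∃ A, Accompanies G 𝒞 A := by
  subst hk
  obtain ⟨A, hreal, w, hinj, harcs, hrange⟩ := h
  exact ⟨A, hreal, w, hinj, harcs, hrange⟩

theorem stmt8' {V : Type*} [Fintype V] (G : SimpleGraph V) (hG : Chordal G)
    (hedge : ∃ u v : V, G.Adj u v) :
    ∃ 𝒞 : Finset (Set V), IsEffectiveCompetitionCover G 𝒞 := by
  classical
  obtain ⟨r, hrinj, hpeo⟩ := chordal_peo hG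
  obtain ⟨𝒞, hcov, hcard, hmax, hedgeC⟩ := exists_min_maxclique_cover G
  have hVne : Nonempty V := ⟨hedge.choose⟩
  have hminex : ∀ C : Set V, C ∈ 𝒞 → ∃ v, v ∈ C ∧ ∀ x ∈ C, r v ≤ r x := by
    intro C hC
    obtain ⟨x, y, hx, hy, -⟩ := hedgeC C hC
    obtain ⟨v, hv, hmin⟩ := Set.exists_min_image C r (Set.toFinite C) ⟨x, hx⟩
    exact ⟨v, hv, hmin⟩
  set minv : Set V → V := fun C =>
    if h : ∃ v, v ∈ C ∧ ∀ x ∈ C, r v ≤ r x then h.choose else Classical.arbitrary V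
    with hminvdef
  have hminv : ∀ C ∈ 𝒞, minv C ∈ C ∧ ∀ x ∈ C, r (minv C) ≤ r x := by
    intro C hC
    have h := hminex C hC
    rw [hminvdef]
    simp only [dif_pos h]
    exact h.choose_spec
  refine ⟨𝒞, hcov, hcard, fun C hC => hmax C hC, ?_⟩
  by_cases hiso : ∃ p : V, ∀ u, ¬ G.Adj p u
  · -- there is an isolated vertex : competition number 0
    obtain ⟨p, hp⟩ := hiso
    have hpnotin : ∀ C ∈ 𝒞, ∀ u ∈ C, u ≠ p := by
      rintro C hC u hu rfl
      obtain ⟨x, y, hx, hy, hxy⟩ := hedgeC C hC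
      by_cases hux : u = x
      · exact hp y (hux ▸ hxy)
      · exact hp x ((hmax C hC).1 hu hx hux)
    have hconstr := construct_realizer hrinj hpeo hcov hmax hedgeC hminv 0 (Sum.inl p)
      (Sum.elim (fun u => if u = p then 0 else r u + 1) (fun i => i.elim0))
      (by
        intro C hC u hu
        rw [Sum.elim_inl, Sum.elim_inl, if_pos rfl, if_neg (hpnotin C hC u hu)]
        omega)
      (by
        intro C hC D hD u hu hlt
        simp only [Sum.elim_inl, if_neg (hpnotin D hD _ (hminv D hD).1),
          if_neg (hpnotin C hC u hu)]
        have := (hminv C hC).2 u hu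
        omega)
      (by
        intro C hC u hu h
        exact hpnotin C hC u hu (Sum.inl.inj h))
    have hk : compNumber G = 0 := Nat.eq_zero_of_le_zero
      (Nat.sInf_le ⟨hconstr.choose, hconstr.choose_spec.1⟩)
    exact accompany_of_realizer 0 hk hconstr
  · -- no isolated vertex : competition number 1
    push_neg at hiso
    have hconstr := construct_realizer hrinj hpeo hcov hmax hedgeC hminv 1 (Sum.inr 0)
      (Sum.elim (fun u => r u + 1) (fun _ => 0))
      (by intro C hC u hu; simp)
      (by
        intro C hC D hD u hu hlt
        simp only [Sum.elim_inl]
        have := (hminv C hC).2 u hu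
        omega)
      (by intro C hC u hu h; exact Sum.inl_ne_inr h)
    have h0 : ¬ ∃ A : (V ⊕ Fin 0) → (V ⊕ Fin 0) → Prop, Realizes G 0 A := by
      rintro ⟨A, hacyc, hcomp⟩
      have : Nonempty (V ⊕ Fin 0) := ⟨Sum.inl hVne.some⟩
      obtain ⟨x, hx⟩ := exists_sink A hacyc
      cases x with
      | inr i => exact i.elim0
      | inl q =>
        obtain ⟨u, hu⟩ := hiso q
        have hadj : (addIsolated G 0).Adj (Sum.inl q) (Sum.inl u) := ⟨q, u, hu, rfl, rfl⟩
        rw [← hcomp] at hadj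
        obtain ⟨-, z, h1, -⟩ := hadj
        exact hx z h1
    have hk : compNumber G = 1 := by
      have h1mem : 1 ∈ {k | ∃ A : (V ⊕ Fin k) → (V ⊕ Fin k) → Prop, Realizes G k A} :=
        ⟨hconstr.choose, hconstr.choose_spec.1⟩
      have hne : {k | ∃ A : (V ⊕ Fin k) → (V ⊕ Fin k) → Prop, Realizes G k A}.Nonempty :=
        ⟨1, h1mem⟩
      have hmem := Nat.sInf_mem hne
      have hle : sInf {k | ∃ A : (V ⊕ Fin k) → (V ⊕ Fin k) → Prop, Realizes G k A} ≤ 1 :=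
        Nat.sInf_le h1mem
      have hne0 : sInf {k | ∃ A : (V ⊕ Fin k) → (V ⊕ Fin k) → Prop, Realizes G k A} ≠ 0 := by
        intro h
        rw [h] at hmem
        exact h0 hmem
      unfold compNumber
      omega
    exact accompany_of_realizer 1 hk hconstr

end Helpers

/-- every chordal graph with at least one edge has an effective competition
cover. -/
theorem stmt8 {V : Type*} [Fintype V] (G : SimpleGraph V) (hG : Chordal G)
    (hedge : ∃ u v : V, G.Adj u v) :
    ∃ 𝒞 : Finset (Set V), IsEffectiveCompetitionCover G 𝒞 := by
  exact stmt8' G hG hedge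
end

section
/- Let G be a graph with at least one edge such that for every maximal clique C of G, every vertex of C is an endpoint of some edge occupied by C. Then G has an effective competition cover, and in fact the set of all maximal cliques of G is a minimum edge clique cover. -/
lemma exists_maxclique_ext {V : Type*} [Fintype V] (G : SimpleGraph V)
    {D : Set V} (hD : G.IsClique D) : ∃ C, D ⊆ C ∧ IsMaximalClique G C := by
  obtain ⟨C, hC, hmax⟩ := Set.Finite.exists_maximalFor (id : Set V → Set V)
    {C | G.IsClique C ∧ D ⊆ C} (Set.toFinite _) ⟨D, hD, subset_rfl⟩
  exact ⟨C, hC.2, hC.1, fun E hE hCE => hCE.antisymm (hmax (j := E) ⟨hE, hC.2.trans hCE⟩ hCE)⟩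

lemma exists_realizer {V : Type*} [Fintype V] (G : SimpleGraph V) :
    ∃ k, ∃ A : (V ⊕ Fin k) → (V ⊕ Fin k) → Prop, Realizes G k A := by
  classical
  set e := Fintype.equivFin (V × V) with he
  refine ⟨Fintype.card (V × V), fun x y => ∃ p : V × V, G.Adj p.1 p.2 ∧
    y = Sum.inr (e p) ∧ (x = Sum.inl p.1 ∨ x = Sum.inl p.2), ?_, ?_⟩
  · intro v hv
    have key : ∀ x y : V ⊕ Fin (Fintype.card (V × V)),
        Relation.TransGen (fun x y => ∃ p : V × V, G.Adj p.1 p.2 ∧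
        y = Sum.inr (e p) ∧ (x = Sum.inl p.1 ∨ x = Sum.inl p.2)) x y →
        (∃ u : V, x = Sum.inl u) ∧ (∃ i, y = Sum.inr i) := by
      intro x y h
      induction h with
      | single h =>
          obtain ⟨p, _, hy, hx⟩ := h
          exact ⟨by rcases hx with rfl | rfl; exacts [⟨p.1, rfl⟩, ⟨p.2, rfl⟩], ⟨e p, hy⟩⟩
      | tail _ h ih =>
          obtain ⟨p, _, hy, _⟩ := h
          exact ⟨ih.1, ⟨e p, hy⟩⟩
    obtain ⟨⟨u, rfl⟩, ⟨i, h⟩⟩ := key v v hv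
    exact Sum.inl_ne_inr h
  · ext x y
    constructor
    · rintro ⟨hxy, z, ⟨p, hp, rfl, hx⟩, ⟨q, hq, hz, hy⟩⟩
      have hpq : p = q := e.injective (Sum.inr.inj hz)
      subst hpq
      rcases hx with rfl | rfl <;> rcases hy with rfl | rfl
      · exact absurd rfl hxy
      · exact ⟨p.1, p.2, hp, rfl, rfl⟩
      · exact ⟨p.2, p.1, hp.symm, rfl, rfl⟩
      · exact absurd rfl hxy
    · rintro ⟨u, v, huv, rfl, rfl⟩
      exact ⟨by simp [huv.ne], Sum.inr (e (u, v)), ⟨(u, v), huv, rfl, Or.inl rfl⟩,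
        ⟨(u, v), huv, rfl, Or.inr rfl⟩⟩
/-- if every vertex of every maximal clique `C` is an endpoint of an edge
occupied by `C`, then the set of all maximal cliques of `G` is a minimum edge clique
cover, and it is an effective competition cover. -/
theorem stmt10 {V : Type*} [Fintype V] (G : SimpleGraph V)
    (hedge : ∃ u v : V, G.Adj u v)
    (hocc : ∀ C : Set V, IsMaximalClique G C → ∀ v ∈ C, ∃ u : V, Occupies G C v u) :
    ∃ 𝒞 : Finset (Set V), (↑𝒞 : Set (Set V)) = {C | IsMaximalClique G C} ∧
      IsEffectiveCompetitionCover G 𝒞 := by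
  classical
  obtain ⟨u₀, v₀, h₀⟩ := hedge
  haveI : Nonempty V := ⟨u₀⟩
  -- the finset of all maximal cliques
  set M : Set (Set V) := {C | IsMaximalClique G C} with hM
  set 𝒞 : Finset (Set V) := (Set.toFinite M).toFinset with h𝒞def
  have h𝒞 : (↑𝒞 : Set (Set V)) = M := Set.Finite.coe_toFinset _
  have mem𝒞 : ∀ C, C ∈ 𝒞 ↔ IsMaximalClique G C := by
    intro C
    rw [← Finset.mem_coe, h𝒞]
    rfl
  -- maximal cliques are nonempty
  have hnonempty : ∀ C, IsMaximalClique G C → C.Nonempty := by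
    intro C hC
    by_contra h
    rw [Set.not_nonempty_iff_eq_empty] at h
    have h1 : C = {u₀} := hC.2 {u₀} (SimpleGraph.isClique_singleton u₀) (by simp [h])
    rw [h] at h1
    exact absurd h1.symm (Set.singleton_ne_empty u₀)
  -- each maximal clique has an occupied edge
  have hoccedge : ∀ C, IsMaximalClique G C → ∃ a b, Occupies G C a b := by
    intro C hC
    obtain ⟨v, hv⟩ := hnonempty C hC
    obtain ⟨u, hu⟩ := hocc C hC v hv
    exact ⟨v, u, hu⟩
  -- 𝒞 is an edge clique cover
  have hcover : IsEdgeCliqueCover G 𝒞 := by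
    constructor
    · intro C hC
      exact ((mem𝒞 C).1 hC).1
    · intro u v huv
      have hcl : G.IsClique {u, v} := SimpleGraph.isClique_pair.2 (fun _ => huv)
      obtain ⟨C, hsub, hC⟩ := exists_maxclique_ext G hcl
      exact ⟨C, (mem𝒞 C).2 hC, hsub (by simp), hsub (by simp)⟩
  -- minimality of 𝒞
  have hmin : ∀ F : Finset (Set V), IsEdgeCliqueCover G F → 𝒞.card ≤ F.card := by
    intro F hF
    have key : ∀ C ∈ 𝒞, ∃ D, D ∈ F ∧ ∃ a b, Occupies G C a b ∧ a ∈ D ∧ b ∈ D := by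
      intro C hC
      obtain ⟨a, b, hab⟩ := hoccedge C ((mem𝒞 C).1 hC)
      obtain ⟨D, hD, haD, hbD⟩ := hF.2 a b hab.1
      exact ⟨D, hD, a, b, hab, haD, hbD⟩
    choose! f hfF a b hab haD hbD using key
    apply Finset.card_le_card_of_injOn f
    · intro C hC
      exact hfF C hC
    · intro C hC C' hC' hff
      simp only [Finset.mem_coe] at hC hC'
      have hDcl : G.IsClique (f C) := hF.1 (f C) (hfF C hC)
      obtain ⟨Mx, hsub, hMx⟩ := exists_maxclique_ext G hDcl
      have h1 : Mx = C := (hab C hC).2.2.2.2 Mx hMx (hsub (haD C hC)) (hsub (hbD C hC))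
      have h2 : Mx = C' := (hab C' hC').2.2.2.2 Mx hMx
        (hsub (hff ▸ haD C' hC')) (hsub (hff ▸ hbD C' hC'))
      rw [← h1, h2]
  -- ecc number
  have hecc : 𝒞.card = eccNumber G := by
    have h1 : eccNumber G ≤ 𝒞.card := Nat.sInf_le ⟨𝒞, hcover, rfl⟩
    have hne' : {n | ∃ F : Finset (Set V), IsEdgeCliqueCover G F ∧ F.card = n}.Nonempty :=
      ⟨𝒞.card, 𝒞, hcover, rfl⟩
    obtain ⟨F, hF, hcard⟩ := Nat.sInf_mem hne'
    refine le_antisymm ?_ h1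
    calc 𝒞.card ≤ F.card := hmin F hF
      _ = eccNumber G := hcard
  -- a realizer at the competition number
  have hkne : {k | ∃ A : (V ⊕ Fin k) → (V ⊕ Fin k) → Prop, Realizes G k A}.Nonempty :=
    exists_realizer G
  obtain ⟨A₀, hA₀⟩ : ∃ A : (V ⊕ Fin (compNumber G)) → (V ⊕ Fin (compNumber G)) → Prop,
      Realizes G (compNumber G) A := Nat.sInf_mem hkne
  -- basic facts about A₀
  have hGadj : ∀ u v : V,
      (addIsolated G (compNumber G)).Adj (Sum.inl u) (Sum.inl v) ↔ G.Adj u v := by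
    intro u v
    constructor
    · rintro ⟨a, b, hab, ha, hb⟩
      cases Sum.inl.inj ha
      cases Sum.inl.inj hb
      exact hab
    · intro h
      exact ⟨u, v, h, rfl, rfl⟩
  have hcommon : ∀ u v : V, G.Adj u v → ∃ z, A₀ (Sum.inl u) z ∧ A₀ (Sum.inl v) z := by
    intro u v h
    have h2 : (addIsolated G (compNumber G)).Adj (Sum.inl u) (Sum.inl v) := (hGadj u v).2 h
    rw [← hA₀.2] at h2
    exact h2.2
  have hinclique : ∀ z : V ⊕ Fin (compNumber G), ∀ u v : V, u ≠ v →
      A₀ (Sum.inl u) z → A₀ (Sum.inl v) z → G.Adj u v := by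
    intro z u v hne' hu hv
    have h2 : (competitionGraph A₀).Adj (Sum.inl u) (Sum.inl v) := ⟨by simp [hne'], z, hu, hv⟩
    rw [hA₀.2] at h2
    exact (hGadj u v).1 h2
  -- topological rank from acyclicity of A₀
  letI : IsTrans (V ⊕ Fin (compNumber G)) (Relation.TransGen A₀) :=
    ⟨fun _ _ _ => Relation.TransGen.trans⟩
  letI : IsIrrefl (V ⊕ Fin (compNumber G)) (Relation.TransGen A₀) := ⟨fun v => hA₀.1 v⟩
  letI : IsWellFounded (V ⊕ Fin (compNumber G)) (Relation.TransGen A₀) :=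
    ⟨Finite.wellFounded_of_trans_of_irrefl _⟩
  set rk : (V ⊕ Fin (compNumber G)) → Ordinal := IsWellFounded.rank (Relation.TransGen A₀)
    with hrk
  have hrk_lt : ∀ x y, A₀ x y → rk x < rk y := fun x y h =>
    IsWellFounded.rank_lt_of_rel (Relation.TransGen.single h)
  -- candidate out-neighbors for each maximal clique
  set Cand : Set V → Set (V ⊕ Fin (compNumber G)) := fun C =>
    {z | ∃ a b, Occupies G C a b ∧ A₀ (Sum.inl a) z ∧ A₀ (Sum.inl b) z} with hCand
  have hcand : ∀ C, IsMaximalClique G C → ∀ v ∈ C,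
      ∃ z, A₀ (Sum.inl v) z ∧ z ∈ Cand C := by
    intro C hC v hv
    obtain ⟨u, hu⟩ := hocc C hC v hv
    obtain ⟨z, hz1, hz2⟩ := hcommon v u hu.1
    exact ⟨z, hz1, v, u, hu, hz1, hz2⟩
  -- choice of a rank-maximal candidate for each maximal clique
  have hzC : ∀ C, IsMaximalClique G C → ∃ z, z ∈ Cand C ∧ ∀ z' ∈ Cand C, rk z' ≤ rk z := by
    intro C hC
    obtain ⟨v, hv⟩ := hnonempty C hC
    obtain ⟨z₀, _, hz₀⟩ := hcand C hC v hv
    obtain ⟨z, hz, hmax⟩ := Set.Finite.exists_maximalFor rk (Cand C) (Set.toFinite _) ⟨z₀, hz₀⟩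
    refine ⟨z, hz, fun z' hz' => ?_⟩
    by_contra hlt
    push_neg at hlt
    exact absurd (hmax (j := z') hz' hlt.le) (not_le.2 hlt)
  choose! zf hzf1 hzf2 using hzC
  -- injectivity of zf on maximal cliques
  have hinj : ∀ C C', IsMaximalClique G C → IsMaximalClique G C' → zf C = zf C' → C = C' := by
    intro C C' hC hC' heq
    obtain ⟨a1, b1, hab1, haz1, hbz1⟩ := hzf1 C hC
    obtain ⟨a2, b2, hab2, haz2, hbz2⟩ := hzf1 C' hC'
    rw [← heq] at haz2 hbz2
    have hclD : G.IsClique {a1, b1, a2, b2} := by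
      rw [SimpleGraph.isClique_iff]
      intro x hx y hy hxy
      have hx' : A₀ (Sum.inl x) (zf C) := by
        rcases hx with rfl | rfl | rfl | rfl
        exacts [haz1, hbz1, haz2, hbz2]
      have hy' : A₀ (Sum.inl y) (zf C) := by
        rcases hy with rfl | rfl | rfl | rfl
        exacts [haz1, hbz1, haz2, hbz2]
      exact hinclique (zf C) x y hxy hx' hy'
    obtain ⟨Mx, hsub, hMx⟩ := exists_maxclique_ext G hclD
    have h1 : Mx = C := hab1.2.2.2.2 Mx hMx (hsub (by simp)) (hsub (by simp))
    have h2 : Mx = C' := hab2.2.2.2.2 Mx hMx (hsub (by simp)) (hsub (by simp))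
    rw [← h1, h2]
  -- the new digraph
  set Anew : (V ⊕ Fin (compNumber G)) → (V ⊕ Fin (compNumber G)) → Prop :=
    fun x y => ∃ C, IsMaximalClique G C ∧ y = zf C ∧ ∃ v ∈ C, x = Sum.inl v with hAnew
  have harc : ∀ x y, Anew x y → rk x < rk y := by
    rintro x y ⟨C, hC, rfl, v, hv, rfl⟩
    obtain ⟨z', hz'1, hz'cand⟩ := hcand C hC v hv
    exact lt_of_lt_of_le (hrk_lt _ _ hz'1) (hzf2 C hC z' hz'cand)
  have hacyc : Digraph.Acyclic Anew := by
    intro v hv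
    have hmono : ∀ x y, Relation.TransGen Anew x y → rk x < rk y := by
      intro x y h
      induction h with
      | single h => exact harc _ _ h
      | tail _ h ih => exact ih.trans (harc _ _ h)
    exact lt_irrefl _ (hmono v v hv)
  have hcg : competitionGraph Anew = addIsolated G (compNumber G) := by
    ext x y
    constructor
    · rintro ⟨hxy, z, ⟨C, hC, rfl, a, ha, rfl⟩, ⟨C', hC', hz', b, hb, rfl⟩⟩
      have hCC' : C = C' := hinj C C' hC hC' hz'
      subst hCC'
      have hne2 : a ≠ b := fun h => hxy (by rw [h])
      exact ⟨a, b, hC.1 ha hb hne2, rfl, rfl⟩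
    · rintro ⟨a, b, hab, rfl, rfl⟩
      have hcl : G.IsClique {a, b} := SimpleGraph.isClique_pair.2 (fun _ => hab)
      obtain ⟨C, hsub, hC⟩ := exists_maxclique_ext G hcl
      exact ⟨by simp [hab.ne], zf C, ⟨C, hC, rfl, a, hsub (by simp), rfl⟩,
        ⟨C, hC, rfl, b, hsub (by simp), rfl⟩⟩
  -- the accompanying structure
  set w : 𝒞 → (V ⊕ Fin (compNumber G)) := fun C => zf C with hw
  have hwinj : Function.Injective w := by
    intro C C' h
    exact Subtype.ext (hinj _ _ ((mem𝒞 _).1 C.2) ((mem𝒞 _).1 C'.2) h)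
  refine ⟨𝒞, h𝒞, hcover, hecc, fun C hC => (mem𝒞 C).1 hC, Anew, ⟨hacyc, hcg⟩, w, hwinj,
    ?_, ?_⟩
  · intro C v hv
    exact ⟨C.1, (mem𝒞 _).1 C.2, rfl, v, hv, rfl⟩
  · ext x
    constructor
    · rintro ⟨u, C, hC, rfl, -⟩
      exact ⟨⟨C, (mem𝒞 C).2 hC⟩, rfl⟩
    · rintro ⟨C, rfl⟩
      obtain ⟨v, hv⟩ := hnonempty C.1 ((mem𝒞 _).1 C.2)
      exact ⟨Sum.inl v, C.1, (mem𝒞 _).1 C.2, rfl, v, hv, rfl⟩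
end
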